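/- arXiv:2306.06231 — 5 statements merged into one kernel-verified Lean document; each statement's English description precedes it below -/
import Mathlib

section
/- Let n ≥ 2 be an integer and α > −1 a real number. Define the matrix sequence X = (X_ξ)_{ξ∈Ω_n} by X_2 := I_n and X_ξ := 0 ∈ M_{d_ξ}(ℂ) for every ξ ∈ Ω_n with ξ ≠ 2. Then X ∈ L_n, and for every a ∈ L∞_lim([0,1)) one has sup_{ξ∈Ω_n} ‖X_ξ − γ(a)_ξ‖ ≥ 1/2, where ‖·‖ is the ℓ²-operator norm on matrices. In particular, X does not belong to the closure of {γ(a) : a ∈ L∞_lim([0,1))} in the sup-operator-norm, so this closure is a proper subset of L_n. -/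
open MeasureTheory Filter
open scoped ENNReal

noncomputable section

/-- Generalized binomial coefficient `x(x-1)⋯(x-j+1)/j!`. -/
def gbinom (x : ℝ) (j : ℕ) : ℝ :=
  (∏ i ∈ Finset.range j, (x - i)) / (Nat.factorial j)

/-- Shifted Jacobi polynomial `Q_m^{(α,β)}` on `[0,1]`:
`Q_m^{(α,β)}(t) = Σ_{k=0}^m binom(α+β+m+k,k)·binom(β+m,m-k)·(-1)^{m-k}·t^k`. -/
def jacQ (α β : ℝ) (m : ℕ) (t : ℝ) : ℝ :=
  ∑ k ∈ Finset.range (m + 1),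
    gbinom (α + β + m + k) k * gbinom (β + m) (m - k) * (-1 : ℝ) ^ (m - k) * t ^ k

/-- Normalizing coefficient
`κ(α,β,m) = sqrt((2m+α+β+1)·Γ(m+α+β+1)·m!/(Γ(m+α+1)·Γ(m+β+1)))`. -/
def jacCoef (α β : ℝ) (m : ℕ) : ℝ :=
  Real.sqrt ((2 * m + α + β + 1) * Real.Gamma (m + α + β + 1) * (Nat.factorial m) /
    (Real.Gamma (m + α + 1) * Real.Gamma (m + β + 1)))

/-- Jacobi function `J_m^{(α,β)}(t) = κ(α,β,m)·(1-t)^{α/2}·t^{β/2}·Q_m^{(α,β)}(t)`. -/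
def jacJ (α β : ℝ) (m : ℕ) (t : ℝ) : ℝ :=
  jacCoef α β m * (1 - t) ^ (α / 2) * t ^ (β / 2) * jacQ α β m t

/-- `dd n ξ = min(n+ξ, n)` (for `ξ ≥ 1-n`), written as a total function into `ℕ`. -/
def dd (n : ℕ) (ξ : ℤ) : ℕ := n - (-ξ).toNat

lemma dd_le (n : ℕ) (ξ : ℤ) : dd n ξ ≤ n := Nat.sub_le _ _

/-- The set `Ω_n = {ξ ∈ ℤ : ξ ≥ -n+1}` as a subtype. -/
abbrev Om (n : ℕ) : Type := {ξ : ℤ // 1 - (n : ℤ) ≤ ξ}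

/-- The entry `γ(a)_{ξ,j,k} = κ(α,|ξ|,j)·κ(α,|ξ|,k)·
∫₀¹ a(√t)·Q_j^{(α,|ξ|)}(t)·Q_k^{(α,|ξ|)}(t)·(1-t)^α·t^{|ξ|} dt`. -/
def gammaEnt (α : ℝ) (a : ℝ → ℂ) (ξ : ℤ) (j k : ℕ) : ℂ :=
  ((jacCoef α ξ.natAbs j * jacCoef α ξ.natAbs k : ℝ) : ℂ) *
    ∫ t in (0:ℝ)..1, a (Real.sqrt t) *
      ((jacQ α ξ.natAbs j t * jacQ α ξ.natAbs k t * (1 - t) ^ α * t ^ (ξ.natAbs) : ℝ) : ℂ)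

/-- The matrix `γ(a)_ξ ∈ M_{d_ξ}(ℂ)`. -/
def gammaMat (n : ℕ) (α : ℝ) (a : ℝ → ℂ) (ξ : ℤ) :
    Matrix (Fin (dd n ξ)) (Fin (dd n ξ)) ℂ :=
  Matrix.of fun j k => gammaEnt α a ξ (j : ℕ) (k : ℕ)

/-- Bounded measurable functions on `[0,1)` having a finite limit at `1⁻`. -/
def LinfLim (a : ℝ → ℂ) : Prop :=
  Measurable a ∧ (∃ C : ℝ, ∀ r ∈ Set.Ico (0:ℝ) 1, ‖a r‖ ≤ C) ∧
    ∃ ω : ℂ, Tendsto a (nhdsWithin 1 (Set.Ico (0:ℝ) 1)) (nhds ω)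

/-- The generating symbol `g_p(t) = Q_p^{(α,0)}(t²)`, as a complex-valued function. -/
def gSym (α : ℝ) (p : ℕ) (t : ℝ) : ℂ := ((jacQ α 0 p (t ^ 2) : ℝ) : ℂ)

/-- `⟨A w, w⟩ = Σ_{j,k} conj(w_j)·A_{j,k}·w_k`. -/
def innerForm {d : ℕ} (A : Matrix (Fin d) (Fin d) ℂ) (w : Fin d → ℂ) : ℂ :=
  ∑ j : Fin d, ∑ k : Fin d, (starRingEnd ℂ) (w j) * A j k * w k

open scoped Matrix.Norms.L2Operator

set_option maxHeartbeats 1000000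

/- ---------- auxiliary lemmas ---------- -/

lemma gbinom_zero (x : ℝ) : gbinom x 0 = 1 := by simp [gbinom]
lemma gbinom_one (x : ℝ) : gbinom x 1 = x := by simp [gbinom]
lemma jacQ_zero (α β t : ℝ) : jacQ α β 0 t = 1 := by simp [jacQ, gbinom]
lemma jacQ_one (α t : ℝ) : jacQ α 0 1 t = (α + 2) * t - 1 := by
  simp [jacQ, Finset.sum_range_succ, gbinom]
  ring

lemma sqrt_sq_of_eq {x y : ℝ} (h : x = y) (hy : 0 ≤ y) : Real.sqrt x ^ 2 = y := by
  rw [h, Real.sq_sqrt hy]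

lemma jacCoef_sq_00 (α : ℝ) (hα : -1 < α) : jacCoef α 0 0 ^ 2 = α + 1 := by
  have hΓ : Real.Gamma (α + 1) ≠ 0 := (Real.Gamma_pos_of_pos (by linarith)).ne'
  rw [jacCoef]
  refine sqrt_sq_of_eq ?_ (by linarith)
  push_cast
  rw [show (2:ℝ) * 0 + α + 0 + 1 = α + 1 by ring, show (0:ℝ) + α + 0 + 1 = α + 1 by ring,
    show (0:ℝ) + α + 1 = α + 1 by ring, show (0:ℝ) + 0 + 1 = (1:ℝ) by ring, Real.Gamma_one]
  field_simp
  simp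

lemma jacCoef_sq_01 (α : ℝ) (hα : -1 < α) : jacCoef α 0 1 ^ 2 = α + 3 := by
  have hΓ : Real.Gamma (α + 2) ≠ 0 := (Real.Gamma_pos_of_pos (by linarith)).ne'
  rw [jacCoef]
  refine sqrt_sq_of_eq ?_ (by linarith)
  push_cast
  rw [show (2:ℝ) * 1 + α + 0 + 1 = α + 3 by ring, show (1:ℝ) + α + 0 + 1 = α + 2 by ring,
    show (1:ℝ) + α + 1 = α + 2 by ring, show (1:ℝ) + 0 + 1 = (2:ℝ) by ring, Real.Gamma_two]
  field_simp
  simp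

lemma jacCoef_sq_20 (α : ℝ) (hα : -1 < α) :
    jacCoef α 2 0 ^ 2 = (α + 1) * (α + 2) * (α + 3) / 2 := by
  have h1 : (0:ℝ) < α + 1 := by linarith
  have h2 : (0:ℝ) < α + 2 := by linarith
  have h3 : (0:ℝ) < α + 3 := by linarith
  have hΓ : Real.Gamma (α + 1) ≠ 0 := (Real.Gamma_pos_of_pos h1).ne'
  have hΓ3 : Real.Gamma (α + 3) = (α + 2) * ((α + 1) * Real.Gamma (α + 1)) := by
    rw [show α + 3 = (α + 2) + 1 by ring, Real.Gamma_add_one h2.ne',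
      show α + 2 = (α + 1) + 1 by ring, Real.Gamma_add_one h1.ne']
  have hG3 : Real.Gamma 3 = 2 := by
    rw [show (3:ℝ) = 2 + 1 by norm_num, Real.Gamma_add_one two_ne_zero, Real.Gamma_two]
    norm_num
  rw [jacCoef]
  refine sqrt_sq_of_eq ?_ (by positivity)
  push_cast
  rw [show (2:ℝ) * 0 + α + 2 + 1 = α + 3 by ring, show (0:ℝ) + α + 2 + 1 = α + 3 by ring,
    show (0:ℝ) + α + 1 = α + 1 by ring, show (0:ℝ) + 2 + 1 = (3:ℝ) by ring, hΓ3, hG3]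
  field_simp
  ring

lemma sum_two {M : Type*} [AddCommMonoid M] {d : ℕ} (h : 2 ≤ d) (f : Fin d → M)
    (hf : ∀ i : Fin d, (i : ℕ) ≠ 0 → (i : ℕ) ≠ 1 → f i = 0) :
    ∑ i, f i = f ⟨0, by omega⟩ + f ⟨1, by omega⟩ := by
  have hne : (⟨0, by omega⟩ : Fin d) ≠ ⟨1, by omega⟩ := by simp [Fin.ext_iff]
  rw [← Finset.sum_pair hne]
  refine (Finset.sum_subset (Finset.subset_univ _) ?_).symm
  intro x _ hx
  simp only [Finset.mem_insert, Finset.mem_singleton] at hx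
  push_neg at hx
  exact hf x (by simpa [Fin.ext_iff] using hx.1) (by simpa [Fin.ext_iff] using hx.2)

lemma innerForm_two {d : ℕ} (h : 2 ≤ d) (A : Matrix (Fin d) (Fin d) ℂ) (c₀ c₁ : ℂ) :
    innerForm A (fun i => if (i : ℕ) = 0 then c₀ else if (i : ℕ) = 1 then c₁ else 0) =
      (starRingEnd ℂ) c₀ * A ⟨0, by omega⟩ ⟨0, by omega⟩ * c₀ +
      (starRingEnd ℂ) c₀ * A ⟨0, by omega⟩ ⟨1, by omega⟩ * c₁ +
      ((starRingEnd ℂ) c₁ * A ⟨1, by omega⟩ ⟨0, by omega⟩ * c₀ +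
      (starRingEnd ℂ) c₁ * A ⟨1, by omega⟩ ⟨1, by omega⟩ * c₁) := by
  unfold innerForm
  rw [sum_two h _ (fun j hj0 hj1 => by
    simp only [hj0, hj1, if_false]
    simp)]
  congr 1
  · rw [sum_two h _ (fun k hk0 hk1 => by simp only [hk0, hk1, if_false]; simp)]
    simp
  · rw [sum_two h _ (fun k hk0 hk1 => by simp only [hk0, hk1, if_false]; simp)]
    simp

lemma innerForm_le {d : ℕ} (A : Matrix (Fin d) (Fin d) ℂ) (w : EuclideanSpace ℂ (Fin d)) :
    ‖innerForm A w‖ ≤ ‖A‖ * ∑ i, ‖w i‖ ^ 2 := by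
  have h1 : innerForm A w =
      inner (𝕜 := ℂ) w ((EuclideanSpace.equiv (Fin d) ℂ).symm (A.mulVec w)) := by
    simp only [innerForm, PiLp.inner_apply, RCLike.inner_apply]
    refine Finset.sum_congr rfl fun j _ => ?_
    show ∑ k : Fin d, (starRingEnd ℂ) (w j) * A j k * w k =
      (∑ k : Fin d, A j k * w k) * (starRingEnd ℂ) (w j)
    rw [Finset.sum_mul]
    exact Finset.sum_congr rfl fun k _ => by ring
  have h2 : ‖w‖ ^ 2 = ∑ i, ‖w i‖ ^ 2 := by
    rw [EuclideanSpace.norm_eq, Real.sq_sqrt (by positivity)]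
  calc ‖innerForm A w‖ ≤ ‖w‖ * ‖(EuclideanSpace.equiv (Fin d) ℂ).symm (A.mulVec w)‖ := by
        rw [h1]; exact norm_inner_le_norm _ _
    _ ≤ ‖w‖ * (‖A‖ * ‖w‖) :=
        mul_le_mul_of_nonneg_left (Matrix.l2_opNorm_mulVec A w) (norm_nonneg _)
    _ = ‖A‖ * ‖w‖ ^ 2 := by ring
    _ = ‖A‖ * ∑ i, ‖w i‖ ^ 2 := by rw [h2]

lemma keyInt (α : ℝ) (hα : -1 < α) (a : ℝ → ℂ) (ha : Measurable a) (C : ℝ)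
    (hC : ∀ r ∈ Set.Ico (0:ℝ) 1, ‖a r‖ ≤ C) (g : ℝ → ℝ) (hg : Continuous g) :
    IntervalIntegrable (fun t => a (Real.sqrt t) * ((g t * (1 - t) ^ α : ℝ) : ℂ))
      volume 0 1 := by
  rw [intervalIntegrable_iff, Set.uIoc_of_le (by norm_num : (0:ℝ) ≤ 1)]
  have h1 : IntervalIntegrable (fun x : ℝ => x ^ α) volume 0 1 :=
    intervalIntegral.intervalIntegrable_rpow' hα
  have h2 := h1.comp_sub_left 1
  have h3 : IntervalIntegrable (fun x : ℝ => (1 - x) ^ α) volume 0 1 := by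
    simpa using h2.symm
  rw [intervalIntegrable_iff, Set.uIoc_of_le (by norm_num : (0:ℝ) ≤ 1)] at h3
  have base : IntegrableOn (fun t : ℝ => (((1 - t) ^ α : ℝ) : ℂ)) (Set.Ioc 0 1) volume :=
    h3.ofReal
  obtain ⟨M, hM⟩ : ∃ M, ∀ t ∈ Set.Icc (0:ℝ) 1, |g t| ≤ M := by
    obtain ⟨M, hM⟩ := (isCompact_Icc (a := (0:ℝ)) (b := 1)).exists_bound_of_continuousOn
      hg.continuousOn
    exact ⟨M, fun t ht => by simpa using hM t ht⟩
  have hC0 : 0 ≤ C := le_trans (norm_nonneg _) (hC 0 (by norm_num))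
  have hae : ∀ᵐ t ∂(volume.restrict (Set.Ioc (0:ℝ) 1)), t ≠ 1 := by
    refine (ae_iff).mpr ?_
    have : {t : ℝ | ¬ t ≠ 1} = {1} := by ext t; simp
    rw [this]
    exact le_antisymm (le_trans (Measure.restrict_apply_le _ _) (by simp)) zero_le
  have hbdd : ∀ᵐ t ∂(volume.restrict (Set.Ioc (0:ℝ) 1)),
      ‖a (Real.sqrt t) * ((g t : ℝ) : ℂ)‖ ≤ C * M := by
    filter_upwards [ae_restrict_mem measurableSet_Ioc, hae] with t ht ht1
    have hlt : t < 1 := lt_of_le_of_ne ht.2 ht1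
    have hsq : Real.sqrt t ∈ Set.Ico (0:ℝ) 1 := by
      constructor
      · exact Real.sqrt_nonneg t
      · rw [show (1:ℝ) = Real.sqrt 1 by simp]
        exact Real.sqrt_lt_sqrt ht.1.le hlt
    have hMt : |g t| ≤ M := hM t ⟨ht.1.le, ht.2⟩
    calc ‖a (Real.sqrt t) * ((g t : ℝ) : ℂ)‖ = ‖a (Real.sqrt t)‖ * |g t| := by
          rw [norm_mul, Complex.norm_real, Real.norm_eq_abs]
      _ ≤ C * M := mul_le_mul (hC _ hsq) hMt (abs_nonneg _) hC0
  have hmeas : AEStronglyMeasurable (fun t : ℝ => a (Real.sqrt t) * ((g t : ℝ) : ℂ))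
      (volume.restrict (Set.Ioc (0:ℝ) 1)) :=
    ((ha.comp Real.continuous_sqrt.measurable).mul
      (Complex.measurable_ofReal.comp hg.measurable)).aestronglyMeasurable
  have hfin := Integrable.bdd_mul (c := C * M) base hmeas hbdd
  refine hfin.congr ?_
  refine Eventually.of_forall fun t => ?_
  push_cast
  ring

/-- the matrix sequence `X` with `X_2 = I_n` and `X_ξ = 0` for `ξ ≠ 2` belongs
to `L_n`, but its sup-norm distance to every `γ(a)`, `a ∈ L∞_lim([0,1))`, is at least `1/2`;
hence the closure of `{γ(a)}` is a proper subset of `L_n`. -/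
theorem statement1 (n : ℕ) (hn : 2 ≤ n) (α : ℝ) (hα : -1 < α)
    (X : ∀ ξ : Om n, Matrix (Fin (dd n ξ.1)) (Fin (dd n ξ.1)) ℂ)
    (hX2 : X ⟨2, by omega⟩ = 1)
    (hX0 : ∀ ξ : Om n, ξ.1 ≠ 2 → X ξ = 0) :
    (∃ ω : ℂ, ∀ j k : Fin n,
      Tendsto (fun m : ℕ =>
          X ⟨(m : ℤ), by omega⟩
            (Fin.cast (show n = dd n ((m : ℕ) : ℤ) by unfold dd; omega) j)
            (Fin.cast (show n = dd n ((m : ℕ) : ℤ) by unfold dd; omega) k))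
        atTop (nhds (if j = k then ω else 0))) ∧
    ∀ a : ℝ → ℂ, LinfLim a →
      (1 / 2 : ℝ≥0∞) ≤ ⨆ ξ : Om n, (‖X ξ - gammaMat n α a ξ.1‖₊ : ℝ≥0∞) := by
  have hd0 : (2:ℕ) ≤ dd n 0 := by unfold dd; omega
  have hd2 : (2:ℕ) ≤ dd n 2 := by unfold dd; omega
  constructor
  · refine ⟨0, fun j k => ?_⟩
    rw [ite_self]
    refine Tendsto.congr' ?_ tendsto_const_nhds
    filter_upwards [eventually_ge_atTop 3] with m hm
    have h0 : X ⟨(m:ℤ), by omega⟩ = 0 := hX0 _ (by show ((m:ℕ):ℤ) ≠ 2; omega)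
    rw [h0]
    simp
  · intro a ha
    by_contra hcon
    rw [not_le] at hcon
    obtain ⟨hameas, ⟨C, hC⟩, -⟩ := ha
    have key : ∀ ξ : Om n, ‖X ξ - gammaMat n α a ξ.1‖ < 1/2 := by
      intro ξ
      have h1 : (‖X ξ - gammaMat n α a ξ.1‖₊ : ℝ≥0∞) < 1/2 :=
        lt_of_le_of_lt (le_iSup (fun ξ : Om n => (‖X ξ - gammaMat n α a ξ.1‖₊ : ℝ≥0∞)) ξ) hcon
      have h2 := ENNReal.toReal_strict_mono (by norm_num) h1
      simpa using h2
    have h1' : (0:ℝ) < α + 1 := by linarith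
    have h2' : (0:ℝ) < α + 2 := by linarith
    have h3' : (0:ℝ) < α + 3 := by linarith
    have hκ0 : jacCoef α 0 0 ^ 2 = α + 1 := jacCoef_sq_00 α hα
    have hκ1 : jacCoef α 0 1 ^ 2 = α + 3 := jacCoef_sq_01 α hα
    have hK : jacCoef α 2 0 ^ 2 = (α+1)*(α+2)*(α+3)/2 := jacCoef_sq_20 α hα
    have hκ0ne : jacCoef α 0 0 ≠ 0 := by
      intro h; rw [h] at hκ0; simp at hκ0; linarith
    have hκ1ne : jacCoef α 0 1 ≠ 0 := by
      intro h; rw [h] at hκ1; simp at hκ1; linarith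
    set c : ℝ := 1/(α+2) with hc_def
    set u0 : ℝ := c / jacCoef α 0 0 with hu0_def
    set u1 : ℝ := c / jacCoef α 0 1 with hu1_def
    set ν : ℂ := ∫ t in (0:ℝ)..1, a (Real.sqrt t) * (((1 - t) ^ α * t ^ 2 : ℝ) : ℂ) with hν_def
    have hInt : ∀ g : ℝ → ℝ, Continuous g →
        IntervalIntegrable (fun t => a (Real.sqrt t) * ((g t * (1 - t) ^ α : ℝ) : ℂ))
          volume 0 1 := fun g hg => keyInt α hα a hameas C hC g hg
    have hJlin : ∀ (r : ℝ) (g : ℝ → ℝ),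
        ((r : ℝ) : ℂ) * ∫ t in (0:ℝ)..1, a (Real.sqrt t) * ((g t * (1 - t) ^ α : ℝ) : ℂ)
        = ∫ t in (0:ℝ)..1, a (Real.sqrt t) * ((r * g t * (1 - t) ^ α : ℝ) : ℂ) := by
      intro r g
      rw [← intervalIntegral.integral_const_mul]
      refine intervalIntegral.integral_congr fun t _ => ?_
      push_cast; ring
    -- entry computations at ξ = 2
    have hA : gammaEnt α a 2 0 0 =
        ((jacCoef α 2 0 * jacCoef α 2 0 : ℝ) : ℂ) * ν := by
      unfold gammaEnt
      rw [show ((2:ℤ).natAbs) = 2 by norm_num]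
      simp only [Nat.cast_ofNat]
      congr 1
      rw [hν_def]
      refine intervalIntegral.integral_congr fun t _ => ?_
      rw [jacQ_zero]
      push_cast; ring
    -- entry computations at ξ = 0
    set I1 : ℂ := ∫ t in (0:ℝ)..1, a (Real.sqrt t) * (((1:ℝ) * (1 - t) ^ α : ℝ) : ℂ) with hI1_def
    set Iq : ℂ := ∫ t in (0:ℝ)..1, a (Real.sqrt t) *
      ((((α+2)*t-1) * (1 - t) ^ α : ℝ) : ℂ) with hIq_def
    set Iq2 : ℂ := ∫ t in (0:ℝ)..1, a (Real.sqrt t) *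
      ((((α+2)*t-1)*((α+2)*t-1) * (1 - t) ^ α : ℝ) : ℂ) with hIq2_def
    have hE00 : gammaEnt α a 0 0 0 =
        ((jacCoef α 0 0 * jacCoef α 0 0 : ℝ) : ℂ) * I1 := by
      unfold gammaEnt
      simp only [Int.natAbs_zero, Nat.cast_zero, pow_zero]
      congr 1
      rw [hI1_def]
      refine intervalIntegral.integral_congr fun t _ => ?_
      rw [jacQ_zero]
      push_cast; ring
    have hE01 : gammaEnt α a 0 0 1 =
        ((jacCoef α 0 0 * jacCoef α 0 1 : ℝ) : ℂ) * Iq := by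
      unfold gammaEnt
      simp only [Int.natAbs_zero, Nat.cast_zero, pow_zero]
      congr 1
      rw [hIq_def]
      refine intervalIntegral.integral_congr fun t _ => ?_
      rw [jacQ_zero, jacQ_one]
      push_cast; ring
    have hE10 : gammaEnt α a 0 1 0 =
        ((jacCoef α 0 1 * jacCoef α 0 0 : ℝ) : ℂ) * Iq := by
      unfold gammaEnt
      simp only [Int.natAbs_zero, Nat.cast_zero, pow_zero]
      congr 1
      rw [hIq_def]
      refine intervalIntegral.integral_congr fun t _ => ?_
      rw [jacQ_zero, jacQ_one]
      push_cast; ring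
    have hE11 : gammaEnt α a 0 1 1 =
        ((jacCoef α 0 1 * jacCoef α 0 1 : ℝ) : ℂ) * Iq2 := by
      unfold gammaEnt
      simp only [Int.natAbs_zero, Nat.cast_zero, pow_zero]
      congr 1
      rw [hIq2_def]
      refine intervalIntegral.integral_congr fun t _ => ?_
      rw [jacQ_one]
      push_cast; ring
    -- combination identity
    have hcomb : ((c^2 : ℝ) : ℂ) * I1 + ((c^2 : ℝ) : ℂ) * Iq +
        (((c^2 : ℝ) : ℂ) * Iq + ((c^2 : ℝ) : ℂ) * Iq2) = ν := by
      have hcα : c * (α + 2) = 1 := by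
        rw [hc_def]; field_simp
      have hcα' : (c : ℂ) * ((α : ℂ) + 2) = 1 := by exact_mod_cast hcα
      rw [hI1_def, hIq_def, hIq2_def, hν_def, hJlin, hJlin, hJlin]
      have i1 : IntervalIntegrable
          (fun t => a (Real.sqrt t) * ((c^2 * 1 * (1 - t) ^ α : ℝ) : ℂ)) volume 0 1 :=
        hInt _ (by fun_prop)
      have iq : IntervalIntegrable
          (fun t => a (Real.sqrt t) * ((c^2 * ((α+2)*t-1) * (1 - t) ^ α : ℝ) : ℂ)) volume 0 1 :=
        hInt _ (by fun_prop)
      have iq2 : IntervalIntegrable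
          (fun t => a (Real.sqrt t) * ((c^2 * (((α+2)*t-1)*((α+2)*t-1)) * (1 - t) ^ α : ℝ) : ℂ))
          volume 0 1 :=
        hInt _ (by fun_prop)
      rw [← intervalIntegral.integral_add i1 iq, ← intervalIntegral.integral_add iq iq2,
        ← intervalIntegral.integral_add (i1.add iq) (iq.add iq2)]
      refine intervalIntegral.integral_congr fun t _ => ?_
      push_cast
      linear_combination (a (Real.sqrt t) * ((((1:ℝ) - t) ^ α : ℝ) : ℂ) * (t:ℂ)^2 *
        ((c:ℂ) * ((α:ℂ) + 2) + 1)) * hcα'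
    -- innerForm at ξ = 0
    have hXz : X ⟨0, by omega⟩ = 0 := hX0 _ (by show (0:ℤ) ≠ 2; norm_num)
    have hr00 : u0 * (jacCoef α 0 0 * jacCoef α 0 0) * u0 = c^2 := by
      rw [hu0_def]; field_simp
    have hr01 : u0 * (jacCoef α 0 0 * jacCoef α 0 1) * u1 = c^2 := by
      rw [hu0_def, hu1_def]; field_simp
    have hr10 : u1 * (jacCoef α 0 1 * jacCoef α 0 0) * u0 = c^2 := by
      rw [hu0_def, hu1_def]; field_simp
    have hr11 : u1 * (jacCoef α 0 1 * jacCoef α 0 1) * u1 = c^2 := by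
      rw [hu1_def]; field_simp
    have ec00 : ((u0:ℝ):ℂ) * (((jacCoef α 0 0 * jacCoef α 0 0 : ℝ)):ℂ) * ((u0:ℝ):ℂ)
        = ((c^2 : ℝ):ℂ) := by exact_mod_cast congrArg Complex.ofReal hr00
    have ec01 : ((u0:ℝ):ℂ) * (((jacCoef α 0 0 * jacCoef α 0 1 : ℝ)):ℂ) * ((u1:ℝ):ℂ)
        = ((c^2 : ℝ):ℂ) := by exact_mod_cast congrArg Complex.ofReal hr01
    have ec10 : ((u1:ℝ):ℂ) * (((jacCoef α 0 1 * jacCoef α 0 0 : ℝ)):ℂ) * ((u0:ℝ):ℂ)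
        = ((c^2 : ℝ):ℂ) := by exact_mod_cast congrArg Complex.ofReal hr10
    have ec11 : ((u1:ℝ):ℂ) * (((jacCoef α 0 1 * jacCoef α 0 1 : ℝ)):ℂ) * ((u1:ℝ):ℂ)
        = ((c^2 : ℝ):ℂ) := by exact_mod_cast congrArg Complex.ofReal hr11
    have hIF0 : innerForm (X (⟨0, by omega⟩ : Om n) - gammaMat n α a 0)
        (fun i => if (i:ℕ) = 0 then ((u0:ℝ):ℂ) else if (i:ℕ) = 1 then ((u1:ℝ):ℂ) else 0)
        = -ν := by
      rw [innerForm_two hd0, hXz]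
      simp only [Matrix.sub_apply, Matrix.zero_apply, gammaMat, Matrix.of_apply,
        Complex.conj_ofReal, zero_sub]
      rw [hE00, hE01, hE10, hE11, ← hcomb]
      linear_combination (-I1) * ec00 + (-Iq) * ec01 + (-Iq) * ec10 + (-Iq2) * ec11
    -- innerForm at ξ = 2
    have hIF2 : innerForm (X (⟨2, by omega⟩ : Om n) - gammaMat n α a 2)
        (fun i => if (i:ℕ) = 0 then (1:ℂ) else if (i:ℕ) = 1 then (0:ℂ) else 0)
        = 1 - ((jacCoef α 2 0 * jacCoef α 2 0 : ℝ) : ℂ) * ν := by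
      rw [innerForm_two hd2, hX2]
      simp only [Matrix.sub_apply, gammaMat, Matrix.of_apply, map_one, map_zero,
        mul_zero, zero_mul, add_zero, one_mul, mul_one]
      rw [Matrix.one_apply_eq, hA]
    -- norm bounds
    have hb2 : ‖innerForm (X (⟨2, by omega⟩ : Om n) - gammaMat n α a 2)
        (fun i => if (i:ℕ) = 0 then (1:ℂ) else if (i:ℕ) = 1 then (0:ℂ) else 0)‖ ≤
        ‖X (⟨2, by omega⟩ : Om n) - gammaMat n α a 2‖ *
        ∑ i : Fin (dd n 2), ‖if (i:ℕ) = 0 then (1:ℂ) else if (i:ℕ) = 1 then (0:ℂ) else 0‖^2 :=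
      innerForm_le _ (WithLp.toLp 2 (fun i : Fin (dd n 2) =>
        if (i:ℕ) = 0 then (1:ℂ) else if (i:ℕ) = 1 then (0:ℂ) else 0))
    have hb0 : ‖innerForm (X (⟨0, by omega⟩ : Om n) - gammaMat n α a 0)
        (fun i => if (i:ℕ) = 0 then ((u0:ℝ):ℂ) else if (i:ℕ) = 1 then ((u1:ℝ):ℂ) else 0)‖ ≤
        ‖X (⟨0, by omega⟩ : Om n) - gammaMat n α a 0‖ *
        ∑ i : Fin (dd n 0), ‖if (i:ℕ) = 0 then ((u0:ℝ):ℂ) else if (i:ℕ) = 1 then ((u1:ℝ):ℂ)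
          else 0‖^2 :=
      innerForm_le _ (WithLp.toLp 2 (fun i : Fin (dd n 0) =>
        if (i:ℕ) = 0 then ((u0:ℝ):ℂ) else if (i:ℕ) = 1 then ((u1:ℝ):ℂ) else 0))
    have hsum2 : (∑ i : Fin (dd n 2),
        ‖if (i:ℕ) = 0 then (1:ℂ) else if (i:ℕ) = 1 then (0:ℂ) else 0‖^2) = 1 := by
      rw [sum_two hd2 _ (fun i h0 h1 => by simp [h0, h1])]
      norm_num
    have hsum0 : (∑ i : Fin (dd n 0),
        ‖if (i:ℕ) = 0 then ((u0:ℝ):ℂ) else if (i:ℕ) = 1 then ((u1:ℝ):ℂ) else 0‖^2)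
        = u0^2 + u1^2 := by
      rw [sum_two hd0 _ (fun i h0 h1 => by simp [h0, h1])]
      norm_num [Complex.norm_real, Real.norm_eq_abs, sq_abs]
    rw [hIF2, hsum2, mul_one] at hb2
    rw [hIF0, hsum0, norm_neg] at hb0
    have k2 : ‖X (⟨2, by omega⟩ : Om n) - gammaMat n α a 2‖ < 1/2 := key ⟨2, by omega⟩
    have k0 : ‖X (⟨0, by omega⟩ : Om n) - gammaMat n α a 0‖ < 1/2 := key ⟨0, by omega⟩
    -- numerics
    have hKS : (jacCoef α 2 0 * jacCoef α 2 0) * (u0^2 + u1^2) = 1 := by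
      have hSval : u0^2 + u1^2 = 2 / ((α+1)*(α+2)*(α+3)) := by
        have e0 : u0^2 = c^2/(α+1) := by rw [hu0_def, div_pow, hκ0]
        have e1 : u1^2 = c^2/(α+3) := by rw [hu1_def, div_pow, hκ1]
        rw [e0, e1, hc_def]
        field_simp
        ring
      rw [hSval, show jacCoef α 2 0 * jacCoef α 2 0 = jacCoef α 2 0 ^ 2 by ring, hK]
      field_simp
    have hKpos : 0 < jacCoef α 2 0 * jacCoef α 2 0 := by
      have h : 0 < jacCoef α 2 0 ^ 2 := by
        rw [hK]
        exact div_pos (mul_pos (mul_pos h1' h2') h3') two_pos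
      nlinarith [h]
    have hSpos : 0 < u0^2 + u1^2 := by nlinarith [hKS, hKpos]
    have hν1 : ‖(1:ℂ) - ((jacCoef α 2 0 * jacCoef α 2 0 : ℝ) : ℂ) * ν‖ < 1/2 := by
      calc ‖(1:ℂ) - ((jacCoef α 2 0 * jacCoef α 2 0 : ℝ) : ℂ) * ν‖
          ≤ ‖X (⟨2, by omega⟩ : Om n) - gammaMat n α a 2‖ := hb2
        _ < 1/2 := k2
    have hν0 : ‖ν‖ < (1/2) * (u0^2 + u1^2) := by
      calc ‖ν‖ ≤ ‖X (⟨0, by omega⟩ : Om n) - gammaMat n α a 0‖ * (u0^2 + u1^2) := hb0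
        _ < (1/2) * (u0^2 + u1^2) := by
            exact mul_lt_mul_of_pos_right k0 hSpos
    have hν2 : ‖((jacCoef α 2 0 * jacCoef α 2 0 : ℝ) : ℂ) * ν‖ < 1/2 := by
      rw [norm_mul, Complex.norm_real, Real.norm_eq_abs, abs_of_pos hKpos]
      calc (jacCoef α 2 0 * jacCoef α 2 0) * ‖ν‖
          < (jacCoef α 2 0 * jacCoef α 2 0) * ((1/2) * (u0^2 + u1^2)) :=
            mul_lt_mul_of_pos_left hν0 hKpos
        _ = (1/2) * ((jacCoef α 2 0 * jacCoef α 2 0) * (u0^2 + u1^2)) := by ring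
        _ = 1/2 := by rw [hKS]; ring
    have htri : (1:ℝ) ≤ ‖(1:ℂ) - ((jacCoef α 2 0 * jacCoef α 2 0 : ℝ) : ℂ) * ν‖ +
        ‖((jacCoef α 2 0 * jacCoef α 2 0 : ℝ) : ℂ) * ν‖ := by
      have := norm_add_le ((1:ℂ) - ((jacCoef α 2 0 * jacCoef α 2 0 : ℝ) : ℂ) * ν)
        (((jacCoef α 2 0 * jacCoef α 2 0 : ℝ) : ℂ) * ν)
      simpa using this
    linarith
end
end

section
/- Let α > −1 be a real number. For a bounded measurable a : [0,1) → ℂ and ξ ∈ ℕ₀, set γ₁(a)_ξ := (Γ(α+ξ+2)/(Γ(α+1)·ξ!))·∫₀¹ a(√t)·(1−t)^α·t^ξ dt. Then the set of sequences {(γ₁(a)_ξ)_{ξ∈ℕ₀} : a ∈ L∞_lim([0,1))} is dense in the space of convergent complex sequences with the supremum norm; that is, for every sequence x : ℕ₀ → ℂ having a finite limit and every ε > 0 there exists a ∈ L∞_lim([0,1)) such that sup_{ξ∈ℕ₀} |γ₁(a)_ξ − x_ξ| ≤ ε. -/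
open MeasureTheory Filter
open scoped ENNReal

noncomputable section

/-- `γ₁(a)_ξ = (Γ(α+ξ+2)/(Γ(α+1)·ξ!))·∫₀¹ a(√t)·(1-t)^α·t^ξ dt`. -/
def gammaOne (α : ℝ) (a : ℝ → ℂ) (ξ : ℕ) : ℂ :=
  ((Real.Gamma (α + ξ + 2) / (Real.Gamma (α + 1) * (Nat.factorial ξ)) : ℝ) : ℂ) *
    ∫ t in (0:ℝ)..1, a (Real.sqrt t) * (((1 - t) ^ α * t ^ ξ : ℝ) : ℂ)

def psi (α β : ℝ) (ξ : ℕ) : ℝ :=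
  Real.Gamma (α + ξ + 2) * Real.Gamma (α + β + 1) /
    (Real.Gamma (α + 1) * Real.Gamma (α + β + ξ + 2))

variable {α β : ℝ}

lemma psi_pos (hα : -1 < α) (hβ : 0 ≤ β) (ξ : ℕ) : 0 < psi α β ξ := by
  have hξ : (0:ℝ) ≤ ξ := Nat.cast_nonneg ξ
  have h1 : (0:ℝ) < α + ξ + 2 := by linarith
  have h2 : (0:ℝ) < α + β + 1 := by linarith
  have h3 : (0:ℝ) < α + 1 := by linarith
  have h4 : (0:ℝ) < α + β + ξ + 2 := by linarith
  exact div_pos (mul_pos (Real.Gamma_pos_of_pos h1) (Real.Gamma_pos_of_pos h2))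
    (mul_pos (Real.Gamma_pos_of_pos h3) (Real.Gamma_pos_of_pos h4))

lemma psi_succ (hα : -1 < α) (hβ : 0 ≤ β) (ξ : ℕ) :
    psi α β (ξ + 1) = psi α β ξ * ((α + ξ + 2) / (α + β + ξ + 2)) := by
  have hξ : (0:ℝ) ≤ ξ := Nat.cast_nonneg ξ
  have h1 : (0:ℝ) < α + ξ + 2 := by linarith
  have h3 : (0:ℝ) < α + 1 := by linarith
  have h4 : (0:ℝ) < α + β + ξ + 2 := by linarith
  have e1 : α + (ξ + 1 : ℕ) + 2 = (α + ξ + 2) + 1 := by push_cast; ring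
  have e2 : α + β + (ξ + 1 : ℕ) + 2 = (α + β + ξ + 2) + 1 := by push_cast; ring
  have g1 : Real.Gamma (α + (ξ + 1 : ℕ) + 2) = (α + ξ + 2) * Real.Gamma (α + ξ + 2) := by
    rw [e1, Real.Gamma_add_one h1.ne']
  have g2 : Real.Gamma (α + β + (ξ + 1 : ℕ) + 2) = (α + β + ξ + 2) * Real.Gamma (α + β + ξ + 2) := by
    rw [e2, Real.Gamma_add_one h4.ne']
  rw [psi, psi, g1, g2]
  have hg3 := (Real.Gamma_pos_of_pos h3).ne'
  have hg4 := (Real.Gamma_pos_of_pos h4).ne'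
  field_simp

lemma psi_anti (hα : -1 < α) (hβ : 0 ≤ β) {m ξ : ℕ} (h : m ≤ ξ) :
    psi α β ξ ≤ psi α β m := by
  induction ξ, h using Nat.le_induction with
  | base => exact le_refl _
  | succ ξ hmξ ih =>
    refine le_trans ?_ ih
    rw [psi_succ hα hβ]
    have hξ : (0:ℝ) ≤ ξ := Nat.cast_nonneg ξ
    have h1 : (0:ℝ) < α + ξ + 2 := by linarith
    have h4 : (0:ℝ) < α + β + ξ + 2 := by linarith
    have : (α + ξ + 2) / (α + β + ξ + 2) ≤ 1 := by
      rw [div_le_one h4]; linarith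
    nlinarith [psi_pos hα hβ ξ]

lemma key (α : ℝ) (hα : -1 < α) (n : ℕ) :
    ∀ (e : ℕ → ℂ), (∀ ξ, n ≤ ξ → e ξ = 0) → ∀ δ : ℝ, 0 < δ →
    ∃ (k : ℕ) (c : Fin k → ℂ) (β : Fin k → ℝ), (∀ i, 1 ≤ β i) ∧
      ∀ ξ, ‖(∑ i, c i * ((psi α (β i) ξ : ℝ) : ℂ)) - e ξ‖ ≤ δ := by
  induction n with
  | zero =>
    intro e he δ hδ
    refine ⟨0, Fin.elim0, Fin.elim0, fun i => i.elim0, fun ξ => ?_⟩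
    simp [he ξ (Nat.zero_le ξ)]; exact hδ.le
  | succ n ih =>
    intro e he δ hδ
    -- choose β₀ large
    set M : ℝ := ‖e n‖ with hM
    have hM0 : 0 ≤ M := norm_nonneg _
    have hn : (0:ℝ) ≤ n := Nat.cast_nonneg n
    have hA : (0:ℝ) < α + n + 2 := by linarith
    set β₀ : ℝ := max 1 (2 * (M + 1) * (α + n + 2) / δ) with hβ₀def
    have hβ₀1 : 1 ≤ β₀ := le_max_left _ _
    have hβ₀0 : 0 ≤ β₀ := le_trans zero_le_one hβ₀1
    have hψpos := psi_pos hα hβ₀0 (ξ := n)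
    -- the tail bound for the new term
    have htail : M * ((α + n + 2) / (α + β₀ + n + 2)) ≤ δ / 2 := by
      have h2 : 2 * (M + 1) * (α + n + 2) / δ ≤ β₀ := le_max_right _ _
      have hden : (0:ℝ) < α + β₀ + n + 2 := by linarith
      have key2 : 2 * (M + 1) * (α + n + 2) ≤ δ * β₀ := by
        rw [div_le_iff₀ hδ] at h2; linarith [h2]
      rw [mul_div_assoc', div_le_iff₀ hden]
      nlinarith
    -- residual target
    set c₀ : ℂ := e n / ((psi α β₀ n : ℝ) : ℂ) with hc₀
    set e' : ℕ → ℂ := fun ξ => if ξ < n then e ξ - c₀ * ((psi α β₀ ξ : ℝ) : ℂ) else 0 with he'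
    have he'supp : ∀ ξ, n ≤ ξ → e' ξ = 0 := by
      intro ξ hξ; simp only [he']; rw [if_neg (by omega)]
    obtain ⟨k, c, β, hβ, hsum⟩ := ih e' he'supp (δ / 2) (by linarith)
    refine ⟨k + 1, Fin.cons c₀ c, Fin.cons β₀ β, ?_, ?_⟩
    · intro i
      refine Fin.cases ?_ ?_ i
      · exact hβ₀1
      · exact fun j => hβ j
    · intro ξ
      have hsplit : (∑ i : Fin (k+1), (Fin.cons c₀ c : Fin (k+1) → ℂ) i *
          ((psi α ((Fin.cons β₀ β : Fin (k+1) → ℝ) i) ξ : ℝ) : ℂ))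
          = c₀ * ((psi α β₀ ξ : ℝ) : ℂ) + ∑ i : Fin k, c i * ((psi α (β i) ξ : ℝ) : ℂ) := by
        simp only [Fin.sum_univ_succ, Fin.cons_zero, Fin.cons_succ]
      rw [hsplit]
      rcases lt_or_ge ξ n with hlt | hge
      · have : e' ξ = e ξ - c₀ * ((psi α β₀ ξ : ℝ) : ℂ) := by simp only [he']; rw [if_pos hlt]
        have hb := hsum ξ
        rw [this] at hb
        calc ‖c₀ * ((psi α β₀ ξ : ℝ) : ℂ) + (∑ i : Fin k, c i * ((psi α (β i) ξ : ℝ) : ℂ)) - e ξ‖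
            = ‖(∑ i : Fin k, c i * ((psi α (β i) ξ : ℝ) : ℂ)) - (e ξ - c₀ * ((psi α β₀ ξ : ℝ) : ℂ))‖ := by
              ring_nf
          _ ≤ δ / 2 := hb
          _ ≤ δ := by linarith
      · -- ξ ≥ n
        have hb := hsum ξ
        rw [he'supp ξ hge, sub_zero] at hb
        have hfirst : ‖c₀ * ((psi α β₀ ξ : ℝ) : ℂ) - e ξ‖ ≤ δ / 2 := by
          rcases eq_or_lt_of_le hge with heq | hlt
          · have : c₀ * ((psi α β₀ ξ : ℝ) : ℂ) = e ξ := by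
              rw [← heq, hc₀, div_mul_cancel₀]
              exact_mod_cast (Complex.ofReal_ne_zero.mpr hψpos.ne')
            rw [this, sub_self, norm_zero]; linarith
          · rw [he ξ hlt, sub_zero, norm_mul, Complex.norm_real]
            have hmono : psi α β₀ ξ ≤ psi α β₀ (n + 1) := psi_anti hα hβ₀0 hlt
            have hpos' := psi_pos hα hβ₀0 (ξ := ξ)
            have hval : psi α β₀ (n + 1) = psi α β₀ n * ((α + n + 2) / (α + β₀ + n + 2)) :=
              psi_succ hα hβ₀0 n
            have hc₀norm : ‖c₀‖ = M / psi α β₀ n := by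
              rw [hc₀, norm_div, Complex.norm_real, Real.norm_of_nonneg hψpos.le]
            rw [hc₀norm, Real.norm_of_nonneg hpos'.le]
            calc M / psi α β₀ n * psi α β₀ ξ ≤ M / psi α β₀ n * (psi α β₀ n * ((α + n + 2) / (α + β₀ + n + 2))) := by
                  apply mul_le_mul_of_nonneg_left (hmono.trans_eq hval) (by positivity)
              _ = M * ((α + n + 2) / (α + β₀ + n + 2)) := by
                  rw [← mul_assoc, div_mul_cancel₀ _ hψpos.ne']
              _ ≤ δ / 2 := htail
        calc ‖c₀ * ((psi α β₀ ξ : ℝ) : ℂ) + (∑ i : Fin k, c i * ((psi α (β i) ξ : ℝ) : ℂ)) - e ξ‖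
            ≤ ‖c₀ * ((psi α β₀ ξ : ℝ) : ℂ) - e ξ‖ + ‖∑ i : Fin k, c i * ((psi α (β i) ξ : ℝ) : ℂ)‖ := by
              rw [add_sub_right_comm]; exact norm_add_le _ _
          _ ≤ δ / 2 + δ / 2 := add_le_add hfirst hb
          _ = δ := by linarith

lemma wInt (ξ : ℕ) {s : ℝ} (hs : -1 < s) :
    IntervalIntegrable (fun t : ℝ => t ^ ξ * (1 - t) ^ s) volume 0 1 := by
  have h1 : IntervalIntegrable (fun x : ℝ => x ^ s) volume 0 1 :=
    intervalIntegral.intervalIntegrable_rpow' hs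
  have h2 : IntervalIntegrable (fun t : ℝ => (1 - t) ^ s) volume (1 - 0) (1 - 1) :=
    h1.comp_sub_left 1
  norm_num at h2
  exact (h2.symm).continuousOn_mul (by fun_prop)

lemma beta_real (ξ : ℕ) {s : ℝ} (hs : -1 < s) :
    ∫ t in (0:ℝ)..1, t ^ ξ * (1 - t) ^ s =
      Real.Gamma (ξ + 1) * Real.Gamma (s + 1) / Real.Gamma ((ξ : ℝ) + s + 2) := by
  have hu : (0:ℝ) < (ξ:ℝ) + 1 := by positivity
  have hv : (0:ℝ) < s + 1 := by linarith
  have h := Complex.Gamma_mul_Gamma_eq_betaIntegral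
    (s := (((ξ:ℝ) + 1 : ℝ) : ℂ)) (t := ((s + 1 : ℝ) : ℂ))
    (by simpa using hu) (by simpa using hv)
  have hbeta : Complex.betaIntegral (((ξ:ℝ) + 1 : ℝ) : ℂ) ((s + 1 : ℝ) : ℂ)
      = ((∫ t in (0:ℝ)..1, t ^ ξ * (1 - t) ^ s : ℝ) : ℂ) := by
    rw [Complex.betaIntegral, ← intervalIntegral.integral_ofReal]
    apply intervalIntegral.integral_congr
    intro x hx
    rw [Set.uIcc_of_le zero_le_one] at hx
    obtain ⟨h0, h1⟩ := hx
    dsimp only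
    have e1 : ((((ξ:ℝ) + 1 : ℝ) : ℂ) - 1) = ((ξ:ℕ) : ℂ) := by push_cast; ring
    have e2 : (((s + 1 : ℝ) : ℂ) - 1) = ((s : ℝ) : ℂ) := by push_cast; ring
    rw [e1, e2, Complex.cpow_natCast]
    have e3 : ((1 : ℂ) - (x : ℂ)) = (((1 - x : ℝ)) : ℂ) := by push_cast; ring
    rw [e3, ← Complex.ofReal_cpow (by linarith)]
    push_cast
    ring
  rw [hbeta] at h
  have hne : Complex.Gamma ((((ξ:ℝ) + s + 2 : ℝ)) : ℂ) ≠ 0 := by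
    rw [Complex.Gamma_ofReal]
    exact_mod_cast (Real.Gamma_pos_of_pos (by linarith : (0:ℝ) < (ξ:ℝ) + s + 2)).ne'
  have hI : ((∫ t in (0:ℝ)..1, t ^ ξ * (1 - t) ^ s : ℝ) : ℂ)
      = Complex.Gamma (((ξ:ℝ) + 1 : ℝ) : ℂ) * Complex.Gamma ((s + 1 : ℝ) : ℂ) /
        Complex.Gamma ((((ξ:ℝ) + s + 2 : ℝ)) : ℂ) := by
    rw [eq_div_iff hne, mul_comm]
    have e4 : ((((ξ:ℝ) + s + 2 : ℝ)) : ℂ) = (((ξ:ℝ) + 1 : ℝ) : ℂ) + ((s + 1 : ℝ) : ℂ) := by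
      push_cast; ring
    rw [e4]; exact h.symm
  rw [Complex.Gamma_ofReal, Complex.Gamma_ofReal, Complex.Gamma_ofReal,
    ← Complex.ofReal_mul, ← Complex.ofReal_div] at hI
  exact_mod_cast hI

lemma wIntC (ξ : ℕ) {s : ℝ} (hs : -1 < s) :
    IntervalIntegrable (fun t : ℝ => ((t ^ ξ * (1 - t) ^ s : ℝ) : ℂ)) volume 0 1 :=
  ⟨(wInt ξ hs).1.ofReal, (wInt ξ hs).2.ofReal⟩

lemma gammaOne_comb (α : ℝ) (hα : -1 < α) (l : ℂ) (k : ℕ) (c : Fin k → ℂ) (β : Fin k → ℝ)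
    (hβ : ∀ i, 1 ≤ β i) (ξ : ℕ) :
    gammaOne α (fun r => l + ∑ i, c i * (((1 - r ^ 2) ^ (β i) : ℝ) : ℂ)) ξ
      = l + ∑ i, c i * ((psi α (β i) ξ : ℝ) : ℂ) := by
  have hβ0 : ∀ i, (0:ℝ) < β i := fun i => lt_of_lt_of_le zero_lt_one (hβ i)
  -- step 1: rewrite the integral
  have hcongr : (∫ t in (0:ℝ)..1,
        (l + ∑ i, c i * (((1 - (Real.sqrt t) ^ 2) ^ (β i) : ℝ) : ℂ)) *
          (((1 - t) ^ α * t ^ ξ : ℝ) : ℂ))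
      = ∫ t in (0:ℝ)..1,
        (l * ((t ^ ξ * (1 - t) ^ α : ℝ) : ℂ) +
          ∑ i, c i * ((t ^ ξ * (1 - t) ^ (α + β i) : ℝ) : ℂ)) := by
    apply intervalIntegral.integral_congr
    intro t ht
    rw [Set.uIcc_of_le zero_le_one] at ht
    obtain ⟨h0, h1⟩ := ht
    dsimp only
    rw [Real.sq_sqrt h0]
    rcases eq_or_lt_of_le h1 with rfl | hlt
    · have hz : (1:ℝ) - 1 = 0 := by ring
      have hz1 : ∀ i, ((0:ℝ)) ^ (β i) = 0 := fun i => Real.zero_rpow (hβ0 i).ne'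
      have hz2 : ∀ i, ((0:ℝ)) ^ (α + β i) = 0 := fun i =>
        Real.zero_rpow (by have := hβ i; intro h; linarith : α + β i ≠ 0)
      simp [hz1, hz2, mul_comm]
    · have hpos : (0:ℝ) < 1 - t := by linarith
      have key : ∀ i, ((((1 - t) ^ (β i) * ((1 - t) ^ α * t ^ ξ) : ℝ)) : ℂ)
          = ((t ^ ξ * (1 - t) ^ (α + β i) : ℝ) : ℂ) := by
        intro i
        congr 1
        rw [Real.rpow_add hpos]
        ring
      rw [add_mul, Finset.sum_mul]
      congr 1
      · push_cast
        ring
      · refine Finset.sum_congr rfl fun i _ => ?_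
        rw [mul_assoc, ← Complex.ofReal_mul, key i]
  -- step 2: split and evaluate integrals
  have hInt0 : IntervalIntegrable (fun t : ℝ => l * ((t ^ ξ * (1 - t) ^ α : ℝ) : ℂ)) volume 0 1 :=
    (wIntC ξ hα).const_mul l
  have hInti : ∀ i ∈ (Finset.univ : Finset (Fin k)),
      IntervalIntegrable (fun t : ℝ => c i * ((t ^ ξ * (1 - t) ^ (α + β i) : ℝ) : ℂ)) volume 0 1 :=
    fun i _ => (wIntC ξ (by have := hβ i; linarith : (-1:ℝ) < α + β i)).const_mul (c i)
  have hsumInt : IntervalIntegrable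
      (fun t : ℝ => ∑ i, c i * ((t ^ ξ * (1 - t) ^ (α + β i) : ℝ) : ℂ)) volume 0 1 := by
    have h := IntervalIntegrable.sum (μ := volume) (a := (0:ℝ)) (b := (1:ℝ)) Finset.univ hInti
    have he : (∑ i : Fin k, fun t : ℝ => c i * ((t ^ ξ * (1 - t) ^ (α + β i) : ℝ) : ℂ))
        = fun t : ℝ => ∑ i, c i * ((t ^ ξ * (1 - t) ^ (α + β i) : ℝ) : ℂ) := by
      funext t; rw [Finset.sum_apply]
    rwa [he] at h
  rw [gammaOne]
  rw [hcongr, intervalIntegral.integral_add hInt0 hsumInt,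
    intervalIntegral.integral_finset_sum hInti]
  simp only [intervalIntegral.integral_const_mul, intervalIntegral.integral_ofReal]
  -- evaluate beta integrals
  rw [beta_real ξ hα]
  have hrw : ∀ i : Fin k, (∫ t in (0:ℝ)..1, t ^ ξ * (1 - t) ^ (α + β i))
      = Real.Gamma (ξ + 1) * Real.Gamma ((α + β i) + 1) / Real.Gamma ((ξ : ℝ) + (α + β i) + 2) :=
    fun i => beta_real ξ (by have := hβ i; linarith : (-1:ℝ) < α + β i)
  -- now pure algebra with Gamma values
  have hξ0 : (0:ℝ) ≤ (ξ:ℝ) := Nat.cast_nonneg ξ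
  have hg1 : (0:ℝ) < Real.Gamma (α + ξ + 2) := Real.Gamma_pos_of_pos (by linarith)
  have hg2 : (0:ℝ) < Real.Gamma (α + 1) := Real.Gamma_pos_of_pos (by linarith)
  have hg3 : (0:ℝ) < Real.Gamma ((ξ:ℝ) + 1) := Real.Gamma_pos_of_pos (by linarith)
  set C : ℝ := Real.Gamma (α + ξ + 2) / (Real.Gamma (α + 1) * (Nat.factorial ξ)) with hC
  have hfac : ((Nat.factorial ξ : ℕ) : ℝ) = Real.Gamma ((ξ:ℝ) + 1) :=
    (Real.Gamma_nat_eq_factorial ξ).symm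
  have h0 : C * (Real.Gamma (ξ + 1) * Real.Gamma (α + 1) / Real.Gamma ((ξ:ℝ) + α + 2)) = 1 := by
    have e : (ξ:ℝ) + α + 2 = α + ξ + 2 := by ring
    rw [hC, hfac, e]
    field_simp
  have hi : ∀ i : Fin k,
      C * (Real.Gamma (ξ + 1) * Real.Gamma ((α + β i) + 1) / Real.Gamma ((ξ:ℝ) + (α + β i) + 2))
        = psi α (β i) ξ := by
    intro i
    have e : (ξ:ℝ) + (α + β i) + 2 = α + β i + ξ + 2 := by ring
    have e2 : α + β i + 1 = α + β i + 1 := rfl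
    have hg4 : (0:ℝ) < Real.Gamma (α + β i + ξ + 2) :=
      Real.Gamma_pos_of_pos (by have := hβ i; linarith)
    rw [hC, hfac, e, psi]
    field_simp
  -- assemble
  rw [mul_add, Finset.mul_sum]
  congr 1
  · rw [show ((C : ℝ) : ℂ) * (l * ((Real.Gamma (ξ + 1) * Real.Gamma (α + 1) / Real.Gamma ((ξ:ℝ) + α + 2) : ℝ) : ℂ)) = l * (((C * (Real.Gamma (ξ + 1) * Real.Gamma (α + 1) / Real.Gamma ((ξ:ℝ) + α + 2)) : ℝ)) : ℂ) by push_cast; ring, h0]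
    simp
  · refine Finset.sum_congr rfl fun i _ => ?_
    rw [hrw i]
    rw [show ((C : ℝ) : ℂ) * (c i * ((Real.Gamma (ξ + 1) * Real.Gamma ((α + β i) + 1) / Real.Gamma ((ξ:ℝ) + (α + β i) + 2) : ℝ) : ℂ)) = c i * (((C * (Real.Gamma (ξ + 1) * Real.Gamma ((α + β i) + 1) / Real.Gamma ((ξ:ℝ) + (α + β i) + 2)) : ℝ)) : ℂ) by push_cast; ring, hi i]

lemma aF_cont (l : ℂ) (k : ℕ) (c : Fin k → ℂ) (β : Fin k → ℝ) (hβ : ∀ i, 1 ≤ β i) :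
    Continuous (fun r : ℝ => l + ∑ i, c i * (((1 - r ^ 2) ^ (β i) : ℝ) : ℂ)) := by
  refine continuous_const.add (continuous_finset_sum _ fun i _ => continuous_const.mul ?_)
  refine Complex.continuous_ofReal.comp ?_
  rw [continuous_iff_continuousAt]
  intro x
  exact (Real.continuousAt_rpow_const _ _ (Or.inr (by have := hβ i; linarith))).comp
    ((continuous_const.sub (continuous_pow 2)).continuousAt)

lemma aF_lim (l : ℂ) (k : ℕ) (c : Fin k → ℂ) (β : Fin k → ℝ) (hβ : ∀ i, 1 ≤ β i) :
    Tendsto (fun r : ℝ => l + ∑ i, c i * (((1 - r ^ 2) ^ (β i) : ℝ) : ℂ))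
      (nhdsWithin 1 (Set.Ico (0:ℝ) 1)) (nhds l) := by
  have hc := (aF_cont l k c β hβ).continuousAt (x := 1)
  have hz : ∀ i : Fin k, ((1:ℝ) - 1 ^ 2) ^ (β i) = 0 := fun i => by
    norm_num
    exact Real.zero_rpow (by have := hβ i; linarith)
  have hval : l + ∑ i, c i * ((((1:ℝ) - 1 ^ 2) ^ (β i) : ℝ) : ℂ) = l := by
    simp only [hz]
    simp
  have h2 := hc.tendsto
  rw [hval] at h2
  exact h2.mono_left nhdsWithin_le_nhds


/-- the sequences `γ₁(a)`, `a ∈ L∞_lim([0,1))`, are dense in the space of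
convergent sequences with the supremum norm. -/
theorem statement3 (α : ℝ) (hα : -1 < α) (x : ℕ → ℂ)
    (hx : ∃ l : ℂ, Tendsto x atTop (nhds l)) (ε : ℝ) (hε : 0 < ε) :
    ∃ a : ℝ → ℂ, LinfLim a ∧ ∀ ξ : ℕ, ‖gammaOne α a ξ - x ξ‖ ≤ ε := by
  obtain ⟨l, hl⟩ := hx
  obtain ⟨N, hN⟩ := (Metric.tendsto_atTop.mp hl) (ε / 2) (by linarith)
  set e : ℕ → ℂ := fun ξ => if ξ < N then x ξ - l else 0 with he
  have hesupp : ∀ ξ, N ≤ ξ → e ξ = 0 := fun ξ hξ => by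
    simp only [he]; rw [if_neg (by omega)]
  obtain ⟨k, c, β, hβ1, hsum⟩ := key α hα N e hesupp (ε / 2) (by linarith)
  refine ⟨fun r => l + ∑ i, c i * (((1 - r ^ 2) ^ (β i) : ℝ) : ℂ), ⟨?_, ?_, ?_⟩, ?_⟩
  · exact (aF_cont l k c β hβ1).measurable
  · refine ⟨‖l‖ + ∑ i, ‖c i‖, fun r hr => ?_⟩
    obtain ⟨h0, h1⟩ := hr
    refine (norm_add_le _ _).trans (add_le_add (le_refl _) ?_)
    refine (norm_sum_le _ _).trans (Finset.sum_le_sum fun i _ => ?_)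
    rw [norm_mul]
    have hb : (0:ℝ) ≤ 1 - r ^ 2 := by nlinarith
    have hb1 : 1 - r ^ 2 ≤ 1 := by nlinarith
    have : ‖(((1 - r ^ 2) ^ (β i) : ℝ) : ℂ)‖ ≤ 1 := by
      rw [Complex.norm_real, Real.norm_of_nonneg (Real.rpow_nonneg hb _)]
      exact Real.rpow_le_one hb hb1 (by have := hβ1 i; linarith)
    calc ‖c i‖ * ‖(((1 - r ^ 2) ^ (β i) : ℝ) : ℂ)‖ ≤ ‖c i‖ * 1 :=
          mul_le_mul_of_nonneg_left this (norm_nonneg _)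
      _ = ‖c i‖ := mul_one _
  · exact ⟨l, aF_lim l k c β hβ1⟩
  · intro ξ
    rw [gammaOne_comb α hα l k c β hβ1 ξ]
    have h1 := hsum ξ
    have h2 : ‖l + e ξ - x ξ‖ ≤ ε / 2 := by
      simp only [he]
      by_cases hξ : ξ < N
      · rw [if_pos hξ]; simp
        linarith
      · rw [if_neg hξ]
        have := hN ξ (by omega)
        rw [dist_eq_norm] at this
        rw [add_zero, ← norm_neg]
        simp only [neg_sub]
        linarith
    calc ‖l + (∑ i, c i * ((psi α (β i) ξ : ℝ) : ℂ)) - x ξ‖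
        = ‖((∑ i, c i * ((psi α (β i) ξ : ℝ) : ℂ)) - e ξ) + (l + e ξ - x ξ)‖ := by ring_nf
      _ ≤ ‖(∑ i, c i * ((psi α (β i) ξ : ℝ) : ℂ)) - e ξ‖ + ‖l + e ξ - x ξ‖ := norm_add_le _ _
      _ ≤ ε / 2 + ε / 2 := add_le_add h1 h2
      _ = ε := by linarith
end
end

section
/- Let α > −1 be a real number, m ∈ ℕ₀, and 0 < x < 1. Then lim_{β→+∞} sup_{t∈(0,x]} |J_m^{(α,β)}(t)| = 0, where the limit is taken over real β tending to +∞. -/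
open MeasureTheory Filter
open scoped ENNReal

noncomputable section

lemma myGamma_mono {a b : ℝ} (ha : 2 ≤ a) (hab : a ≤ b) :
    Real.Gamma a ≤ Real.Gamma b :=
  Real.Gamma_strictMonoOn_Ici.monotoneOn (Set.mem_Ici.2 ha)
    (Set.mem_Ici.2 (ha.trans hab)) hab

lemma myGamma_add_nat (z : ℝ) (hz : 0 < z) (N : ℕ) :
    Real.Gamma (z + N) = (∏ i ∈ Finset.range N, (z + i)) * Real.Gamma z := by
  induction N with
  | zero => simp
  | succ n ih =>
    have hzn : (0:ℝ) < z + n := by positivity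
    have h : z + ((n+1 : ℕ) : ℝ) = (z + n) + 1 := by push_cast; ring
    rw [h, Real.Gamma_add_one hzn.ne', Finset.prod_range_succ, ih]
    ring

lemma abs_gbinom_le (y : ℝ) (j : ℕ) : |gbinom y j| ≤ (|y| + j) ^ j := by
  have h1 : |gbinom y j| = (∏ i ∈ Finset.range j, |y - i|) / (Nat.factorial j) := by
    rw [gbinom, abs_div, Finset.abs_prod, Nat.abs_cast]
  rw [h1]
  have hfac : (1:ℝ) ≤ (Nat.factorial j : ℝ) := by
    exact_mod_cast Nat.one_le_iff_ne_zero.2 (Nat.factorial_ne_zero j)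
  calc (∏ i ∈ Finset.range j, |y - i|) / (Nat.factorial j)
      ≤ ∏ i ∈ Finset.range j, |y - i| :=
        div_le_self (Finset.prod_nonneg fun i _ => abs_nonneg _) hfac
    _ ≤ ∏ _i ∈ Finset.range j, (|y| + j) := by
        refine Finset.prod_le_prod (fun i _ => abs_nonneg _) (fun i hi => ?_)
        have hij : (i : ℝ) ≤ j := by
          exact_mod_cast (Finset.mem_range.1 hi).le
        calc |y - i| ≤ |y| + |(i:ℝ)| := abs_sub _ _
          _ ≤ |y| + j := by
              rw [abs_of_nonneg (by positivity : (0:ℝ) ≤ (i:ℝ))]; linarith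
    _ = (|y| + j) ^ j := by rw [Finset.prod_const, Finset.card_range]

lemma abs_jacQ_le (α β : ℝ) (m : ℕ) (t : ℝ) (ht0 : 0 ≤ t) (ht1 : t ≤ 1) :
    |jacQ α β m t| ≤ ((m:ℝ)+1) * (|α| + |β| + 3*m + 1) ^ m := by
  set R : ℝ := |α| + |β| + 3*m + 1 with hRdef
  have hR0 : (0:ℝ) ≤ R := by positivity
  have key : ∀ k ∈ Finset.range (m+1),
      |gbinom (α + β + m + k) k * gbinom (β + m) (m - k) * (-1 : ℝ) ^ (m - k) * t ^ k|
        ≤ R ^ m := by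
    intro k hk
    have hkm : k ≤ m := Finset.mem_range_succ_iff.1 hk
    have hb1 : |α + β + m + k| + k ≤ R := by
      have := abs_add_le (α + β + m) (k : ℝ)
      have h2 : |α + β + (m:ℝ)| ≤ |α| + |β| + m := by
        calc |α + β + (m:ℝ)| ≤ |α + β| + |(m:ℝ)| := abs_add_le _ _
          _ ≤ |α| + |β| + m := by
              have := abs_add_le α β
              rw [abs_of_nonneg (by positivity : (0:ℝ) ≤ (m:ℝ))] at *
              linarith
      have hkabs : |(k:ℝ)| = (k:ℝ) := abs_of_nonneg (by positivity)
      have hkR : (k:ℝ) ≤ m := by exact_mod_cast hkm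
      have : |α + β + (m:ℝ) + k| ≤ |α + β + (m:ℝ)| + |(k:ℝ)| := abs_add_le _ _
      rw [hkabs] at this
      simp only [hRdef]
      linarith
    have hb2 : |β + m| + ((m:ℝ) - k) ≤ R := by
      have h2 : |β + (m:ℝ)| ≤ |β| + m := by
        calc |β + (m:ℝ)| ≤ |β| + |(m:ℝ)| := abs_add_le _ _
          _ = |β| + m := by rw [abs_of_nonneg (by positivity : (0:ℝ) ≤ (m:ℝ))]
      have hkR : (0:ℝ) ≤ (k:ℝ) := by positivity
      simp only [hRdef]
      have : (0:ℝ) ≤ |α| := abs_nonneg _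
      linarith
    have hg1 : |gbinom (α + β + m + k) k| ≤ R ^ k := by
      refine (abs_gbinom_le _ _).trans (pow_le_pow_left₀ (by positivity) hb1 _)
    have hg2 : |gbinom (β + m) (m - k)| ≤ R ^ (m - k) := by
      refine (abs_gbinom_le _ _).trans ?_
      refine pow_le_pow_left₀ (by positivity) ?_ _
      have : ((m - k : ℕ) : ℝ) ≤ (m:ℝ) - k := by
        rw [Nat.cast_sub hkm]
      linarith [hb2, this]
    have htk : |t ^ k| ≤ 1 := by
      rw [abs_of_nonneg (pow_nonneg ht0 _)]
      exact pow_le_one₀ ht0 ht1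
    calc |gbinom (α + β + m + k) k * gbinom (β + m) (m - k) * (-1 : ℝ) ^ (m - k) * t ^ k|
        = |gbinom (α + β + m + k) k| * |gbinom (β + m) (m - k)| * 1 * |t ^ k| := by
          rw [abs_mul, abs_mul, abs_mul, abs_pow, abs_neg, abs_one, one_pow]
      _ ≤ R ^ k * R ^ (m - k) * 1 * 1 := by
          refine mul_le_mul (mul_le_mul (mul_le_mul hg1 hg2 (abs_nonneg _)
            (by positivity)) le_rfl zero_le_one (by positivity)) htk (abs_nonneg _)
            (by positivity)
      _ = R ^ m := by
          rw [mul_one, mul_one, ← pow_add, Nat.add_sub_cancel' hkm]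
  calc |jacQ α β m t| ≤ ∑ k ∈ Finset.range (m+1),
        |gbinom (α + β + m + k) k * gbinom (β + m) (m - k) * (-1 : ℝ) ^ (m - k) * t ^ k| :=
        Finset.abs_sum_le_sum_abs _ _
    _ ≤ ∑ _k ∈ Finset.range (m+1), R ^ m := Finset.sum_le_sum key
    _ = ((m:ℝ)+1) * R ^ m := by
        rw [Finset.sum_const, Finset.card_range, nsmul_eq_mul]; push_cast; ring
lemma jacCoef_le (α : ℝ) (hα : -1 < α) (m : ℕ) (β : ℝ) (hβ : 2 ≤ β) :
    jacCoef α β m ≤ Real.sqrt (((Nat.factorial m : ℝ) / Real.Gamma (m + α + 1)) *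
      (β + (|α| + (⌈α⌉₊ : ℝ) + 3 * m + 1)) ^ (⌈α⌉₊ + 1)) := by
  set N : ℕ := ⌈α⌉₊ with hN
  set c : ℝ := |α| + (N : ℝ) + 3 * m + 1 with hc
  have hαN : α ≤ (N : ℝ) := Nat.le_ceil α
  have hG3 : 0 < Real.Gamma ((m:ℝ) + α + 1) :=
    Real.Gamma_pos_of_pos (by push_cast; linarith [Nat.cast_nonneg (α := ℝ) m])
  have hG2 : 0 < Real.Gamma ((m:ℝ) + β + 1) :=
    Real.Gamma_pos_of_pos (by positivity)
  have hz : (0:ℝ) < (m:ℝ) + β + 1 := by positivity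
  have hmono : Real.Gamma ((m:ℝ) + α + β + 1) ≤ Real.Gamma (((m:ℝ) + β + 1) + N) := by
    refine myGamma_mono (by linarith [Nat.cast_nonneg (α := ℝ) m]) (by linarith)
  have hadd : Real.Gamma (((m:ℝ) + β + 1) + N)
      = (∏ i ∈ Finset.range N, ((m:ℝ) + β + 1 + i)) * Real.Gamma ((m:ℝ) + β + 1) :=
    myGamma_add_nat _ hz N
  have hA0 : (0:ℝ) ≤ 2 * (m:ℝ) + α + β + 1 := by
    have := Nat.cast_nonneg (α := ℝ) m; linarith
  have hG1 : 0 < Real.Gamma ((m:ℝ) + α + β + 1) :=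
    Real.Gamma_pos_of_pos (by linarith [Nat.cast_nonneg (α := ℝ) m])
  have hprodnn : ∀ i ∈ Finset.range N, (0:ℝ) ≤ (m:ℝ) + β + 1 + i ∧
      (m:ℝ) + β + 1 + i ≤ β + c := by
    intro i hi
    have hiN : (i:ℝ) + 1 ≤ (N:ℝ) := by exact_mod_cast Finset.mem_range.1 hi
    refine ⟨by positivity, ?_⟩
    simp only [hc]
    have h1 : (0:ℝ) ≤ |α| := abs_nonneg _
    have h2 : (m:ℝ) ≤ 3 * m := by linarith [Nat.cast_nonneg (α := ℝ) m]
    linarith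
  have hprod_le : (2 * (m:ℝ) + α + β + 1) * (∏ i ∈ Finset.range N, ((m:ℝ) + β + 1 + i))
      ≤ (β + c) ^ (N + 1) := by
    have h1 : 2 * (m:ℝ) + α + β + 1 ≤ β + c := by
      have := le_abs_self α
      simp only [hc]
      have h2 : (m:ℝ) ≤ 3 * m := by linarith [Nat.cast_nonneg (α := ℝ) m]
      linarith [Nat.cast_nonneg (α := ℝ) N]
    calc (2 * (m:ℝ) + α + β + 1) * (∏ i ∈ Finset.range N, ((m:ℝ) + β + 1 + i))
        ≤ (β + c) * (∏ _i ∈ Finset.range N, (β + c)) := by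
          refine mul_le_mul h1 (Finset.prod_le_prod (fun i hi => (hprodnn i hi).1)
            (fun i hi => (hprodnn i hi).2))
            (Finset.prod_nonneg fun i hi => (hprodnn i hi).1) (by linarith)
      _ = (β + c) ^ (N + 1) := by rw [Finset.prod_const, Finset.card_range, pow_succ]; ring
  rw [jacCoef]
  refine Real.sqrt_le_sqrt ?_
  rw [div_le_iff₀ (by positivity)]
  have step1 : (2 * (m:ℝ) + α + β + 1) * Real.Gamma ((m:ℝ) + α + β + 1) * (Nat.factorial m : ℝ)
      ≤ ((β + c) ^ (N + 1) * Real.Gamma ((m:ℝ) + β + 1)) * (Nat.factorial m : ℝ) := by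
    refine mul_le_mul_of_nonneg_right ?_ (by positivity)
    calc (2 * (m:ℝ) + α + β + 1) * Real.Gamma ((m:ℝ) + α + β + 1)
        ≤ (2 * (m:ℝ) + α + β + 1) *
            ((∏ i ∈ Finset.range N, ((m:ℝ) + β + 1 + i)) * Real.Gamma ((m:ℝ) + β + 1)) :=
          mul_le_mul_of_nonneg_left (hmono.trans_eq hadd) hA0
      _ = ((2 * (m:ℝ) + α + β + 1) * (∏ i ∈ Finset.range N, ((m:ℝ) + β + 1 + i)))
            * Real.Gamma ((m:ℝ) + β + 1) := by ring
      _ ≤ (β + c) ^ (N + 1) * Real.Gamma ((m:ℝ) + β + 1) :=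
          mul_le_mul_of_nonneg_right hprod_le hG2.le
  refine step1.trans_eq ?_
  field_simp

/-- `lim_{β→+∞} sup_{t∈(0,x]} |J_m^{(α,β)}(t)| = 0`. -/
theorem statement5 (α : ℝ) (hα : -1 < α) (m : ℕ) (x : ℝ) (hx0 : 0 < x) (hx1 : x < 1) :
    Tendsto (fun β : ℝ => ⨆ t ∈ Set.Ioc (0:ℝ) x, |jacJ α β m t|) atTop (nhds 0) := by
  set N : ℕ := ⌈α⌉₊ with hN
  set c : ℝ := |α| + (N : ℝ) + 3 * m + 1 with hc
  have hc0 : (0:ℝ) < c := by positivity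
  set D : ℝ := max 1 ((1 - x) ^ (α / 2)) with hD
  have hD1 : (1:ℝ) ≤ D := le_max_left _ _
  have hD0 : (0:ℝ) < D := lt_of_lt_of_le one_pos hD1
  have hG3 : 0 < Real.Gamma ((m:ℝ) + α + 1) :=
    Real.Gamma_pos_of_pos (by linarith [Nat.cast_nonneg (α := ℝ) m])
  set K₁ : ℝ := (Nat.factorial m : ℝ) / Real.Gamma ((m:ℝ) + α + 1) with hK₁
  have hK₁0 : (0:ℝ) < K₁ := by
    refine div_pos ?_ hG3
    exact_mod_cast Nat.factorial_pos m
  set K₂ : ℝ := K₁ * D ^ 2 * ((m:ℝ) + 1) ^ 2 with hK₂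
  set K : ℕ := N + 1 + 2 * m with hK
  set H : ℝ → ℝ := fun β => K₂ * (β + c) ^ K * x ^ β with hH
  clear_value N c D K₁ K₂ K H
  -- `H` tends to `0`
  have hb : (0:ℝ) < -Real.log x := by
    have := Real.log_neg hx0 hx1; linarith
  have hxc : (0:ℝ) < x ^ c := Real.rpow_pos_of_pos hx0 c
  have hHtd : Tendsto H atTop (nhds 0) := by
    have hbase : Tendsto (fun y : ℝ => y ^ (K:ℝ) * Real.exp (-(-Real.log x) * y))
        atTop (nhds 0) := tendsto_rpow_mul_exp_neg_mul_atTop_nhds_zero _ _ hb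
    have hcomp : Tendsto (fun β : ℝ =>
        (β + c) ^ (K:ℝ) * Real.exp (-(-Real.log x) * (β + c))) atTop (nhds 0) :=
      hbase.comp (tendsto_atTop_add_const_right _ c tendsto_id)
    have heq : H = fun β : ℝ => (K₂ / x ^ c) *
        ((β + c) ^ (K:ℝ) * Real.exp (-(-Real.log x) * (β + c))) := by
      funext β
      have h1 : -(-Real.log x) * (β + c) = Real.log x * (β + c) := by ring
      rw [h1, ← Real.rpow_def_of_pos hx0, Real.rpow_natCast, Real.rpow_add hx0]
      simp only [hH]
      field_simp
    rw [heq]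
    have := hcomp.const_mul (K₂ / x ^ c)
    simpa using this
  have hsq : Tendsto (fun β : ℝ => Real.sqrt (H β)) atTop (nhds 0) := by
    have := (Real.continuous_sqrt.tendsto 0).comp hHtd
    simpa [Function.comp_def] using this
  refine squeeze_zero' (Eventually.of_forall fun β => ?_) ?_ hsq
  · exact Real.iSup_nonneg fun t => Real.iSup_nonneg fun _ => abs_nonneg _
  · filter_upwards [eventually_ge_atTop (2:ℝ)] with β hβ
    refine Real.iSup_le (fun t => Real.iSup_le (fun ht => ?_) (Real.sqrt_nonneg _))
      (Real.sqrt_nonneg _)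
    obtain ⟨ht0, htx⟩ := ht
    have ht1 : t < 1 := lt_of_le_of_lt htx hx1
    have h1t : (0:ℝ) < 1 - t := by linarith
    have hβ0 : (0:ℝ) < β := by linarith
    have hbc0 : (0:ℝ) ≤ β + c := by linarith
    -- the four factor bounds
    have hcoef0 : (0:ℝ) ≤ jacCoef α β m := by rw [jacCoef]; exact Real.sqrt_nonneg _
    have b1 : jacCoef α β m ≤ Real.sqrt (K₁ * (β + c) ^ (N + 1)) := by
      have := jacCoef_le α hα m β hβ
      simpa only [← hN, ← hc, ← hK₁] using this
    have b2 : (1 - t) ^ (α / 2) ≤ D := by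
      rcases le_or_gt 0 α with h | h
      · exact le_trans (Real.rpow_le_one h1t.le (by linarith) (by linarith)) hD1
      · refine le_trans (Real.rpow_le_rpow_of_nonpos (show (0:ℝ) < 1 - x by linarith)
          (show (1:ℝ) - x ≤ 1 - t by linarith) (show α / 2 ≤ 0 by linarith)) ?_
        rw [hD]
        exact le_max_right _ _
    have b3 : t ^ (β / 2) ≤ x ^ (β / 2) :=
      Real.rpow_le_rpow ht0.le htx (by linarith)
    have b4 : |jacQ α β m t| ≤ ((m:ℝ) + 1) * (β + c) ^ m := by
      refine (abs_jacQ_le α β m t ht0.le ht1.le).trans ?_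
      refine mul_le_mul_of_nonneg_left ?_ (by positivity)
      refine pow_le_pow_left₀ (by positivity) ?_ _
      rw [abs_of_nonneg hβ0.le]
      simp only [hc]
      have h1 : (0:ℝ) ≤ |α| := abs_nonneg _
      have h2 : (0:ℝ) ≤ (N:ℝ) := Nat.cast_nonneg _
      linarith
    -- assemble the pointwise bound
    have habs : |jacJ α β m t| =
        jacCoef α β m * (1 - t) ^ (α / 2) * t ^ (β / 2) * |jacQ α β m t| := by
      rw [jacJ, abs_mul, abs_mul, abs_mul, abs_of_nonneg hcoef0,
        abs_of_nonneg (Real.rpow_nonneg h1t.le _), abs_of_nonneg (Real.rpow_nonneg ht0.le _)]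
    rw [habs]
    have step : jacCoef α β m * (1 - t) ^ (α / 2) * t ^ (β / 2) * |jacQ α β m t|
        ≤ Real.sqrt (K₁ * (β + c) ^ (N + 1)) * D * x ^ (β / 2)
          * (((m:ℝ) + 1) * (β + c) ^ m) := by
      have h2 : (0:ℝ) ≤ (1 - t) ^ (α / 2) := Real.rpow_nonneg h1t.le _
      have h3 : (0:ℝ) ≤ t ^ (β / 2) := Real.rpow_nonneg ht0.le _
      gcongr <;>
        first
          | exact b1
          | exact b2
          | exact b3
          | exact b4
          | exact Real.sqrt_nonneg _
          | exact hD0.le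
          | exact Real.rpow_nonneg hx0.le _
          | exact h2
          | exact h3
          | exact hcoef0
          | positivity
    refine step.trans ?_
    -- equality with `sqrt (H β)`
    set a : ℝ := K₁ * (β + c) ^ (N + 1) with ha
    set bq : ℝ := D * x ^ (β / 2) * (((m:ℝ) + 1) * (β + c) ^ m) with hbq
    have ha0 : (0:ℝ) ≤ a := by positivity
    have hbq0 : (0:ℝ) ≤ bq := by positivity
    have hrw : Real.sqrt a * D * x ^ (β / 2) * (((m:ℝ) + 1) * (β + c) ^ m)
        = Real.sqrt (a * bq ^ 2) := by
      rw [Real.sqrt_mul ha0, Real.sqrt_sq hbq0, hbq]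
      ring
    rw [hrw]
    refine Real.sqrt_le_sqrt (le_of_eq ?_)
    have hxhalf : (x ^ (β / 2)) ^ 2 = x ^ β := by
      rw [← Real.rpow_natCast (x ^ (β / 2)) 2, ← Real.rpow_mul hx0.le]
      norm_num
    have expand : a * bq ^ 2 = (K₁ * D ^ 2 * ((m:ℝ) + 1) ^ 2)
        * ((β + c) ^ (N + 1) * ((β + c) ^ m) ^ 2) * (x ^ (β / 2)) ^ 2 := by
      simp only [ha, hbq]; ring
    rw [expand, hxhalf, ← pow_mul, ← pow_add]
    have hKK : N + 1 + m * 2 = K := by omega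
    rw [hKK]
    simp only [hH, hK₂]
    try ring
end
end

section
/- Let n ≥ 1 and let G_0, …, G_{n−1} ∈ M_n(ℂ) satisfy: (1) G_{n−1} = c·E_{n−1,n−1} for some c ≠ 0; (2) for every p ∈ {0,…,n−2}, (G_p)_{n−1,p} ≠ 0; (3) for every p ∈ {1,…,n−2} and every k < p, (G_p)_{n−1,k} = 0. Then there exist complex numbers ν_{p,j} (for 0 ≤ p ≤ j ≤ n−1) such that for every p ∈ {0,…,n−1}, E_{n−1,p} = G_{n−1}·Σ_{j=p}^{n−1} ν_{p,j}·G_j, and moreover for all p, q ∈ {0,…,n−1}, E_{p,q} = (Σ_{j=p}^{n−1} conj(ν_{p,j})·G_j*)·G_{n−1}*·G_{n−1}·(Σ_{k=q}^{n−1} ν_{q,k}·G_k), where * denotes the conjugate transpose. -/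
open MeasureTheory Filter
open scoped ENNReal

noncomputable section

open scoped Matrix

/-- construction of the matrix units `E_{p,q}` from a family of generators
`G_0, …, G_{n-1}` with the prescribed last-row structure. -/
theorem statement7 (n : ℕ) (hn : 1 ≤ n) (G : Fin n → Matrix (Fin n) (Fin n) ℂ)
    (h1 : ∃ c : ℂ, c ≠ 0 ∧
      G ⟨n - 1, by omega⟩ = c • Matrix.single ⟨n - 1, by omega⟩ ⟨n - 1, by omega⟩ 1)
    (h2 : ∀ p : Fin n, (p : ℕ) < n - 1 → G p ⟨n - 1, by omega⟩ p ≠ 0)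
    (h3 : ∀ p : Fin n, 1 ≤ (p : ℕ) → (p : ℕ) < n - 1 →
      ∀ k : Fin n, (k : ℕ) < (p : ℕ) → G p ⟨n - 1, by omega⟩ k = 0) :
    ∃ ν : Fin n → Fin n → ℂ,
      (∀ p : Fin n, Matrix.single ⟨n - 1, by omega⟩ p 1
        = G ⟨n - 1, by omega⟩ * ∑ j ∈ Finset.Ici p, ν p j • G j) ∧
      (∀ p q : Fin n, Matrix.single p q 1
        = (∑ j ∈ Finset.Ici p, (starRingEnd ℂ) (ν p j) • (G j)ᴴ)
          * ((G ⟨n - 1, by omega⟩)ᴴ * G ⟨n - 1, by omega⟩)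
          * (∑ k ∈ Finset.Ici q, ν q k • G k)) := by
  obtain ⟨c, hc, hG⟩ := h1
  set N : Fin n := ⟨n - 1, by omega⟩ with hNdef
  -- The matrix of last rows
  set M : Matrix (Fin n) (Fin n) ℂ := Matrix.of (fun j q => G j N q) with hMdef
  have hGN : ∀ q : Fin n, M N q = if q = N then c else 0 := by
    intro q
    simp only [hMdef, Matrix.of_apply, hG, Matrix.smul_apply, Matrix.single,
      Matrix.of_apply, smul_eq_mul, mul_ite, mul_one, mul_zero]
    by_cases h : q = N <;> simp [h, eq_comm]
  have hup : M.BlockTriangular id := by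
    intro j q hlt
    simp only [id_eq] at hlt
    by_cases hjN : j = N
    · subst hjN
      rw [hGN]
      have : q ≠ N := ne_of_lt hlt
      simp [this]
    · have hjn : (j : ℕ) < n - 1 := by
        have := j.isLt
        have : (j : ℕ) ≠ n - 1 := fun h => hjN (Fin.ext h)
        omega
      have hj1 : 1 ≤ (j : ℕ) := by
        have : (q : ℕ) < (j : ℕ) := hlt
        omega
      exact h3 j hj1 hjn q hlt
  have hdiag : ∀ p : Fin n, M p p ≠ 0 := by
    intro p
    by_cases hpN : p = N
    · subst hpN; rw [hGN]; simpa using hc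
    · have hpn : (p : ℕ) < n - 1 := by
        have := p.isLt
        have : (p : ℕ) ≠ n - 1 := fun h => hpN (Fin.ext h)
        omega
      exact h2 p hpn
  have hdet : IsUnit M.det := by
    rw [Matrix.det_of_upperTriangular hup]
    exact IsUnit.mk0 _ (Finset.prod_ne_zero_iff.mpr fun p _ => hdiag p)
  haveI : Invertible M := M.invertibleOfIsUnitDet hdet
  have hinvmul : M⁻¹ * M = 1 := Matrix.nonsing_inv_mul M hdet
  have hinvup : M⁻¹.BlockTriangular id := Matrix.blockTriangular_inv_of_blockTriangular hup
  set ν : Fin n → Fin n → ℂ := fun p j => c⁻¹ * M⁻¹ p j with hνdef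
  set X : Fin n → Matrix (Fin n) (Fin n) ℂ := fun p => ∑ j ∈ Finset.Ici p, ν p j • G j
    with hXdef
  have hrow : ∀ p q : Fin n, X p N q = c⁻¹ * (if p = q then 1 else 0) := by
    intro p q
    have hext : ∑ j ∈ Finset.Ici p, ν p j * M j q = ∑ j : Fin n, ν p j * M j q := by
      refine Finset.sum_subset (Finset.subset_univ _) (fun j _ hj => ?_)
      have hjp : j < p := by simpa using hj
      have : M⁻¹ p j = 0 := hinvup (by simpa using hjp)
      simp [hνdef, this]
    have : X p N q = ∑ j ∈ Finset.Ici p, ν p j * M j q := by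
      simp [hXdef, Matrix.sum_apply, hMdef]
    rw [this, hext]
    have : ∑ j : Fin n, ν p j * M j q = c⁻¹ * (M⁻¹ * M) p q := by
      rw [Matrix.mul_apply, Finset.mul_sum]
      exact Finset.sum_congr rfl fun j _ => by ring
    rw [this, hinvmul, Matrix.one_apply]
  have key : ∀ p : Fin n, Matrix.single N p 1 = G N * X p := by
    intro p
    ext r q
    rw [hG, Matrix.smul_mul, Matrix.smul_apply, smul_eq_mul]
    by_cases hr : r = N
    · subst hr
      rw [Matrix.single_mul_apply_same, one_mul, hrow]
      by_cases hpq : p = q <;>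
        simp [Matrix.single, hpq, mul_assoc, mul_inv_cancel₀ hc, eq_comm]
    · have h0 : (Matrix.single N N (1 : ℂ) * X p) r q = 0 :=
        Matrix.single_mul_apply_of_ne _ _ _ _ _ hr _
      rw [h0, mul_zero]
      simp only [Matrix.single, Matrix.of_apply, ite_eq_right_iff, one_ne_zero]
      exact fun h => absurd h.1.symm hr
  refine ⟨ν, key, ?_⟩
  intro p q
  have hXH : ∀ p : Fin n,
      ∑ j ∈ Finset.Ici p, (starRingEnd ℂ) (ν p j) • (G j)ᴴ = (X p)ᴴ := by
    intro p
    rw [hXdef]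
    simp [Matrix.conjTranspose_sum, Matrix.conjTranspose_smul]
  have hstar : ∀ (i j : Fin n), (Matrix.single i j (1 : ℂ))ᴴ
      = Matrix.single j i 1 := by
    intro i j
    ext a b
    simp [Matrix.conjTranspose_apply, Matrix.single, and_comm]
  calc Matrix.single p q (1 : ℂ)
      = Matrix.single p N (1 : ℂ) * Matrix.single N q 1 := by
        rw [Matrix.single_mul_single_same, one_mul]
    _ = (Matrix.single N p (1 : ℂ))ᴴ * Matrix.single N q 1 := by
        rw [hstar]
    _ = (G N * X p)ᴴ * (G N * X q) := by rw [key p, key q]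
    _ = (∑ j ∈ Finset.Ici p, (starRingEnd ℂ) (ν p j) • (G j)ᴴ)
          * ((G N)ᴴ * G N) * (∑ k ∈ Finset.Ici q, ν q k • G k) := by
        rw [hXH, Matrix.conjTranspose_mul]
        simp only [hXdef]
        noncomm_ring
end
end

section
/- Let n ≥ 2 be an integer, α > −1 a real number, and ξ ∈ {−n+1, …, −1}. Then the star-subalgebra of M_{n+ξ}(ℂ) (with conjugate-transpose as star) generated over ℂ by the n+ξ matrices γ(g_{n−1})_ξ, γ(g_n)_ξ, …, γ(g_{2n−2+ξ})_ξ is all of M_{n+ξ}(ℂ). -/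
open MeasureTheory Filter
open scoped ENNReal

noncomputable section

/-! ### Auxiliary lemmas for `statement11` -/

namespace St11Aux

open Finset Polynomial intervalIntegral

lemma fwdDiff_iter_poly_zero : ∀ (p : ℕ) (P : Polynomial ℝ), P.natDegree < p →
    ∀ y : ℝ, (fwdDiff (1:ℝ))^[p] (fun x => Polynomial.eval x P) y = 0 := by
  intro p
  induction p with
  | zero => intro P hP; omega
  | succ p IH =>
    intro P hP y
    rw [Function.iterate_succ_apply]
    have hΔ : fwdDiff (1:ℝ) (fun x => Polynomial.eval x P)
        = fun x => Polynomial.eval x (P.comp (X + C 1) - P) := by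
      funext z; simp [fwdDiff, eval_comp]
    rw [hΔ]
    set Q : Polynomial ℝ := P.comp (X + C 1) - P with hQ
    by_cases hQ0 : Q = 0
    · rw [hQ0]
      have h0 : (fun x : ℝ => Polynomial.eval x (0 : Polynomial ℝ)) = fun _ => (0:ℝ) := by
        funext z; simp
      rw [h0]
      have hfix : fwdDiff (1:ℝ) (fun _ : ℝ => (0:ℝ)) = (fun _ : ℝ => (0:ℝ)) := by
        funext z; simp [fwdDiff]
      rw [Function.iterate_fixed hfix p]
    · have hXC : (X + C (1:ℝ)).natDegree = 1 := Polynomial.natDegree_X_add_C 1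
      have hPd : P.natDegree ≠ 0 := by
        intro h0
        obtain ⟨c, rfl⟩ := Polynomial.natDegree_eq_zero.mp h0
        exact hQ0 (by simp [hQ])
      have hP0 : P ≠ 0 := fun h => hPd (by simp [h])
      have hcomp0 : P.comp (X + C 1) ≠ 0 := by
        intro h
        have h2 := Polynomial.natDegree_comp (p := P) (q := X + C (1:ℝ))
        rw [h, hXC, mul_one, Polynomial.natDegree_zero] at h2
        exact hPd h2.symm
      have hdeg : (P.comp (X + C 1)).degree = P.degree := by
        rw [Polynomial.degree_eq_natDegree hcomp0, Polynomial.degree_eq_natDegree hP0,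
          Polynomial.natDegree_comp, hXC, mul_one]
      have hlc : (P.comp (X + C 1)).leadingCoeff = P.leadingCoeff := by
        rw [Polynomial.leadingCoeff_comp (by rw [hXC]; norm_num),
          Polynomial.leadingCoeff_X_add_C, one_pow, mul_one]
      have hlt : Q.degree < P.degree := by
        have := Polynomial.degree_sub_lt hdeg hcomp0 hlc
        rwa [hdeg] at this
      have hnd : Q.natDegree < P.natDegree := Polynomial.natDegree_lt_natDegree hQ0 hlt
      exact IH Q (by omega) y

lemma alt_sum_poly (p : ℕ) (P : Polynomial ℝ) (hP : P.natDegree < p) :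
    ∑ k ∈ range (p+1), (-1:ℝ)^(p-k) * (p.choose k) * Polynomial.eval (k:ℝ) P = 0 := by
  have h := fwdDiff_iter_eq_sum_shift (1:ℝ) (fun x => Polynomial.eval x P) p 0
  rw [fwdDiff_iter_poly_zero p P hP 0] at h
  refine Eq.trans ?_ h.symm
  apply Finset.sum_congr rfl
  intro k hk
  have h1 : (0:ℝ) + k • (1:ℝ) = (k:ℝ) := by simp
  rw [h1, zsmul_eq_mul]
  push_cast
  ring

noncomputable def Bv (α : ℝ) (m : ℕ) : ℝ :=
  (Nat.factorial m) / ∏ j ∈ Finset.range (m+1), (α+1+j)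


lemma fact_ratio (m k : ℕ) :
    ((Nat.factorial (m+k) : ℝ)) = (Nat.factorial k : ℝ) * ∏ i ∈ range m, ((k:ℝ)+((i:ℝ)+1)) := by
  induction m with
  | zero => simp
  | succ m ih =>
    have h1 : m + 1 + k = (m + k) + 1 := by omega
    rw [h1, Nat.factorial_succ, prod_range_succ]
    push_cast
    rw [ih]
    ring

lemma gbinom_nat (p j : ℕ) (h : j ≤ p) : gbinom (p:ℝ) j = (p.choose j : ℝ) := by
  unfold gbinom
  have h1 : ∏ i ∈ range j, ((p:ℝ) - i) = ((p.descFactorial j : ℕ) : ℝ) := by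
    rw [Nat.descFactorial_eq_prod_range, Nat.cast_prod]
    apply prod_congr rfl
    intro i hi
    rw [mem_range] at hi
    rw [Nat.cast_sub (by omega)]
  rw [h1, Nat.descFactorial_eq_factorial_mul_choose]
  push_cast
  rw [mul_comm, mul_div_assoc, div_self (by positivity : (Nat.factorial j : ℝ) ≠ 0), mul_one]

lemma gbinom_shift (α : ℝ) (p k : ℕ) :
    gbinom (α + p + k) k = (∏ i ∈ range k, (α + 1 + ((p+i : ℕ) : ℝ))) / (Nat.factorial k) := by
  unfold gbinom
  congr 1
  rw [← Finset.prod_range_reflect]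
  apply prod_congr rfl
  intro j hj
  rw [mem_range] at hj
  push_cast
  rw [Nat.cast_sub (by omega : j ≤ k-1), Nat.cast_sub (by omega : 1 ≤ k)]
  push_cast
  ring

lemma key_identity (α : ℝ) (hα : -1 < α) (p m : ℕ) (hm : m < p) :
    ∑ k ∈ range (p+1),
      gbinom (α + p + k) k * gbinom (p:ℝ) (p-k) * (-1:ℝ)^(p-k) * Bv α (m+k) = 0 := by
  have hpos : ∀ j : ℕ, (0:ℝ) < α + 1 + j := fun j => by
    have : (0:ℝ) ≤ j := Nat.cast_nonneg j
    linarith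
  set D : ℝ := ∏ j ∈ range p, (α+1+(j:ℝ)) with hD
  have hDpos : 0 < D := prod_pos fun j _ => hpos j
  set P : Polynomial ℝ :=
    (∏ i ∈ range m, (X + C ((i:ℝ)+1))) * ∏ i ∈ range (p-m-1), (X + C (α+(m:ℝ)+2+i)) with hP
  have hPdeg : P.natDegree < p := by
    have h1 : (∏ i ∈ range m, (X + C ((i:ℝ)+1))).natDegree = m := by
      rw [Polynomial.natDegree_prod _ _ (fun i _ => Polynomial.X_add_C_ne_zero _),
        Finset.sum_congr rfl (fun i _ => Polynomial.natDegree_X_add_C _),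
        Finset.sum_const, card_range, smul_eq_mul, mul_one]
    have h2 : (∏ i ∈ range (p-m-1), (X + C (α+(m:ℝ)+2+i))).natDegree = p - m - 1 := by
      rw [Polynomial.natDegree_prod _ _ (fun i _ => Polynomial.X_add_C_ne_zero _),
        Finset.sum_congr rfl (fun i _ => Polynomial.natDegree_X_add_C _),
        Finset.sum_const, card_range, smul_eq_mul, mul_one]
    rw [hP, Polynomial.natDegree_mul
        (Finset.prod_ne_zero_iff.mpr fun i _ => Polynomial.X_add_C_ne_zero _)
        (Finset.prod_ne_zero_iff.mpr fun i _ => Polynomial.X_add_C_ne_zero _), h1, h2]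
    omega
  have halt := alt_sum_poly p P hPdeg
  have hsumD : (∑ k ∈ range (p+1),
      gbinom (α + p + k) k * gbinom (p:ℝ) (p-k) * (-1:ℝ)^(p-k) * Bv α (m+k)) * D = 0 := by
    rw [Finset.sum_mul, ← halt]
    apply Finset.sum_congr rfl
    intro k hk
    rw [mem_range] at hk
    have hkp : k ≤ p := by omega
    rw [gbinom_shift, gbinom_nat p (p-k) (by omega), Nat.choose_symm hkp, Bv]
    set Ak : ℝ := ∏ i ∈ range k, (α + 1 + ((p+i : ℕ) : ℝ)) with hAk
    set R2 : ℝ := ∏ j ∈ range (m+k+1), (α+1+(j:ℝ)) with hR2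
    set R3 : ℝ := ∏ i ∈ range (p-m-1), (α+1+((m+k+1+i : ℕ) : ℝ)) with hR3
    set F : ℝ := ∏ i ∈ range m, ((k:ℝ)+((i:ℝ)+1)) with hFdef
    have hR2pos : 0 < R2 := prod_pos fun j _ => hpos j
    have e1 : m+k+1+(p-m-1) = p+k := by omega
    have hAD : Ak * D = R2 * R3 := by
      rw [hAk, hD, mul_comm, ← Finset.prod_range_add (fun j => α+1+(j:ℝ)) p k,
        hR2, hR3, ← Finset.prod_range_add (fun j => α+1+(j:ℝ)) (m+k+1) (p-m-1), e1]
    have hF : ((Nat.factorial (m+k) : ℝ)) = (Nat.factorial k : ℝ) * F := fact_ratio m k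
    have hEval : Polynomial.eval (k:ℝ) P = F * R3 := by
      rw [hP, Polynomial.eval_mul, Polynomial.eval_prod, Polynomial.eval_prod]
      congr 1
      · rw [hFdef]; apply prod_congr rfl; intro i _; simp
      · rw [hR3]; apply prod_congr rfl; intro i _
        push_cast
        simp
        ring
    rw [hEval, hF]
    have hk0 : (Nat.factorial k : ℝ) ≠ 0 := by positivity
    have hR20 : R2 ≠ 0 := ne_of_gt hR2pos
    field_simp
    linear_combination (((p.choose k : ℝ)) * F) * hAD
  rcases mul_eq_zero.mp hsumD with h | h
  · exact h
  · exact absurd h (ne_of_gt hDpos)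

def jcoef (α β : ℝ) (m k : ℕ) : ℝ :=
  gbinom (α + β + m + k) k * gbinom (β + m) (m - k) * (-1 : ℝ) ^ (m - k)

lemma jacQ_eq (α β : ℝ) (m : ℕ) (t : ℝ) :
    jacQ α β m t = ∑ k ∈ Finset.range (m+1), jcoef α β m k * t^k := rfl

lemma continuous_jacQ (α β : ℝ) (m : ℕ) : Continuous (fun t => jacQ α β m t) := by
  simp only [jacQ_eq]
  exact continuous_finset_sum _ fun k _ => (continuous_const.mul (continuous_pow k))

-- integrability of the weight
lemma II_base {α : ℝ} (hα : -1 < α) :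
    IntervalIntegrable (fun t : ℝ => (1-t)^α) volume 0 1 := by
  have h1 : IntervalIntegrable (fun x : ℝ => x ^ α) volume 0 1 :=
    intervalIntegral.intervalIntegrable_rpow' hα
  have h2 := h1.comp_sub_left 1
  norm_num at h2
  exact h2.symm

lemma II_mul {α : ℝ} (hα : -1 < α) {g : ℝ → ℝ} (hg : Continuous g) :
    IntervalIntegrable (fun t : ℝ => g t * (1-t)^α) volume 0 1 :=
  (II_base hα).continuousOn_mul hg.continuousOn

lemma integral_pow_rpow {α : ℝ} (hα : -1 < α) (m : ℕ) :
    ∫ t in (0:ℝ)..1, t^m * (1-t)^α = Bv α m := by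
  have hre : 0 < ((α:ℂ)+1).re := by simp; linarith
  have h2 := Complex.betaIntegral_eval_nat_add_one_right hre m
  rw [← Complex.betaIntegral_symm] at h2
  have h1 : Complex.betaIntegral ((m:ℂ)+1) ((α:ℂ)+1)
      = ((∫ t in (0:ℝ)..1, t^m * (1-t)^α : ℝ) : ℂ) := by
    rw [Complex.betaIntegral]
    rw [← intervalIntegral.integral_ofReal]
    apply intervalIntegral.integral_congr
    intro x hx
    rw [Set.uIcc_of_le (by norm_num : (0:ℝ) ≤ 1)] at hx
    have hx1 : (0:ℝ) ≤ 1 - x := by linarith [hx.2]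
    rw [add_sub_cancel_right, add_sub_cancel_right]
    push_cast
    rw [Complex.cpow_natCast, (by push_cast; ring : (1 - (x:ℂ)) = ((1-x:ℝ):ℂ)),
      ← Complex.ofReal_cpow hx1]
  rw [h1] at h2
  have h3 : ((Bv α m : ℝ) : ℂ) = (m.factorial : ℂ) / ∏ j ∈ Finset.range (m+1), ((α:ℂ)+1+j) := by
    rw [Bv]
    push_cast
    rfl
  rw [← Complex.ofReal_inj, h3, ← h2]


/-- The basic moment integral against `Q_p^{(α,0)}`. -/
noncomputable def Ient (α : ℝ) (p m : ℕ) : ℝ :=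
  ∫ t in (0:ℝ)..1, (jacQ α 0 p t * t^m) * (1-t)^α

lemma II_pow_mul {α : ℝ} (hα : -1 < α) (m : ℕ) {g : ℝ → ℝ} (hg : Continuous g) :
    IntervalIntegrable (fun t : ℝ => g t * (t^m * (1-t)^α)) volume 0 1 := by
  have h := II_mul hα (g := fun t => g t * t^m) (hg.mul (continuous_pow m))
  apply h.congr
  intro t _
  beta_reduce
  ring

lemma jcoef_zero_eq (α : ℝ) (p k : ℕ) :
    jcoef α 0 p k = gbinom (α + p + k) k * gbinom (p:ℝ) (p-k) * (-1:ℝ)^(p-k) := by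
  rw [jcoef, add_zero, zero_add]

lemma Ient_eq_sum {α : ℝ} (hα : -1 < α) (p m : ℕ) :
    Ient α p m = ∑ k ∈ range (p+1), jcoef α 0 p k * Bv α (m+k) := by
  rw [Ient]
  have hpt : ∀ t : ℝ, (jacQ α 0 p t * t^m) * (1-t)^α
      = ∑ k ∈ range (p+1), jcoef α 0 p k * (t^(m+k) * (1-t)^α) := by
    intro t
    rw [jacQ_eq, Finset.sum_mul, Finset.sum_mul]
    apply Finset.sum_congr rfl
    intro k _
    rw [pow_add]
    ring
  rw [intervalIntegral.integral_congr (fun t _ => hpt t)]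
  rw [intervalIntegral.integral_finset_sum (fun k _ =>
    ((II_pow_mul hα (m+k) (continuous_const (y := jcoef α 0 p k))).congr (fun t _ => rfl)))]
  apply Finset.sum_congr rfl
  intro k _
  rw [intervalIntegral.integral_const_mul, integral_pow_rpow hα]

lemma Ient_vanish {α : ℝ} (hα : -1 < α) {p m : ℕ} (hm : m < p) : Ient α p m = 0 := by
  rw [Ient_eq_sum hα]
  refine Eq.trans ?_ (key_identity α hα p m hm)
  exact Finset.sum_congr rfl fun k _ => by rw [jcoef_zero_eq]

lemma gbinom_pos {x : ℝ} {j : ℕ} (hx : (j:ℝ) - 1 < x) : 0 < gbinom x j := by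
  rw [gbinom]
  apply div_pos
  · apply Finset.prod_pos
    intro i hi
    rw [Finset.mem_range] at hi
    have : (i:ℝ) ≤ (j:ℝ) - 1 := by
      have : (i:ℝ) + 1 ≤ (j:ℝ) := by exact_mod_cast hi
      linarith
    linarith
  · exact_mod_cast Nat.factorial_pos j

lemma gbinom_zero (x : ℝ) : gbinom x 0 = 1 := by simp [gbinom]

lemma jcoef_lead_pos {α β : ℝ} (hα : -1 < α) (hβ : 0 ≤ β) (m : ℕ) :
    0 < jcoef α β m m := by
  rw [jcoef, Nat.sub_self, gbinom_zero, pow_zero, mul_one, mul_one]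
  apply gbinom_pos
  have : (0:ℝ) ≤ m := Nat.cast_nonneg m
  linarith

/-- the Jacobi polynomial as a `Polynomial`. -/
noncomputable def jacP (α β : ℝ) (m : ℕ) : Polynomial ℝ :=
  ∑ k ∈ range (m+1), Polynomial.C (jcoef α β m k) * Polynomial.X ^ k

lemma jacP_eval (α β : ℝ) (m : ℕ) (t : ℝ) : (jacP α β m).eval t = jacQ α β m t := by
  rw [jacP, jacQ_eq, Polynomial.eval_finset_sum]
  simp

lemma jacP_ne_zero {α β : ℝ} (hα : -1 < α) (hβ : 0 ≤ β) (m : ℕ) : jacP α β m ≠ 0 := by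
  intro h
  have hc : (jacP α β m).coeff m = jcoef α β m m := by
    rw [jacP, Polynomial.finset_sum_coeff]
    simp only [Polynomial.coeff_C_mul, Polynomial.coeff_X_pow]
    rw [Finset.sum_eq_single m (fun k _ hk => by rw [if_neg (Ne.symm hk), mul_zero])
      (fun h => absurd (Finset.self_mem_range_succ m) h)]
    simp
  rw [h] at hc
  simp at hc
  have := jcoef_lead_pos hα hβ m
  rw [← hc] at this
  exact lt_irrefl _ this

lemma sq_integral_pos {α : ℝ} (hα : -1 < α) (p : ℕ) :
    0 < ∫ t in (0:ℝ)..1, (jacQ α 0 p t)^2 * (1-t)^α := by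
  have hInt : IntervalIntegrable (fun t : ℝ => (jacQ α 0 p t)^2 * (1-t)^α) volume 0 1 :=
    II_mul hα ((continuous_jacQ α 0 p).pow 2)
  rw [intervalIntegral.integral_of_le (by norm_num : (0:ℝ) ≤ 1)]
  rw [MeasureTheory.setIntegral_pos_iff_support_of_nonneg_ae]
  · -- measure of support
    have hfin : {t : ℝ | (jacP α 0 p).IsRoot t}.Finite :=
      Polynomial.finite_setOf_isRoot (jacP_ne_zero hα le_rfl p)
    have hsub : Set.Ioo (0:ℝ) 1 \ {t : ℝ | (jacP α 0 p).IsRoot t}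
        ⊆ Function.support (fun t : ℝ => (jacQ α 0 p t)^2 * (1-t)^α) ∩ Set.Ioc 0 1 := by
      rintro t ⟨ht, hroot⟩
      constructor
      · have h1 : jacQ α 0 p t ≠ 0 := by
          intro h0
          exact hroot (by rw [Set.mem_setOf_eq, Polynomial.IsRoot, jacP_eval, h0])
        have h2 : (0:ℝ) < (1-t)^α := Real.rpow_pos_of_pos (by linarith [ht.2]) α
        exact ne_of_gt (mul_pos (by positivity) h2)
      · exact Set.Ioo_subset_Ioc_self ht
    calc (0:ℝ≥0∞) < volume (Set.Ioo (0:ℝ) 1 \ {t : ℝ | (jacP α 0 p).IsRoot t}) := by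
          rw [MeasureTheory.measure_diff_null (hfin.measure_zero volume)]
          simp
        _ ≤ _ := measure_mono hsub
  · filter_upwards [MeasureTheory.ae_restrict_mem measurableSet_Ioc] with t ht
    have : (0:ℝ) ≤ 1 - t := by linarith [ht.2]
    positivity
  · exact hInt.1
lemma sq_expand {α : ℝ} (hα : -1 < α) (p : ℕ) :
    (∫ t in (0:ℝ)..1, (jacQ α 0 p t)^2 * (1-t)^α)
      = ∑ k ∈ range (p+1), jcoef α 0 p k * Ient α p k := by
  have hpt : ∀ t : ℝ, (jacQ α 0 p t)^2 * (1-t)^α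
      = ∑ k ∈ range (p+1), jcoef α 0 p k * ((jacQ α 0 p t * t^k) * (1-t)^α) := by
    intro t
    rw [sq]
    nth_rewrite 1 [jacQ_eq]
    rw [Finset.sum_mul, Finset.sum_mul]
    exact Finset.sum_congr rfl fun k _ => by ring
  rw [intervalIntegral.integral_congr (fun t _ => hpt t)]
  rw [intervalIntegral.integral_finset_sum (fun k _ =>
    (II_mul hα (g := fun t => jacQ α 0 p t * t^k) ((continuous_jacQ α 0 p).mul (continuous_pow k))).const_mul _)]
  exact Finset.sum_congr rfl fun k _ => by
    rw [intervalIntegral.integral_const_mul]; rfl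

lemma Ient_pos {α : ℝ} (hα : -1 < α) (p : ℕ) : 0 < Ient α p p := by
  have h := sq_integral_pos hα p
  rw [sq_expand hα p] at h
  rw [Finset.sum_eq_single p (fun k hk hkp => by
      rw [Ient_vanish hα (by rw [Finset.mem_range] at hk; omega), mul_zero])
    (fun h => absurd (Finset.self_mem_range_succ p) h)] at h
  have hlead : 0 < jcoef α 0 p p := jcoef_lead_pos hα le_rfl p
  nlinarith

lemma gammaEnt_eq {α : ℝ} (hα : -1 < α) (p j k : ℕ) (ξ : ℤ) :
    gammaEnt α (gSym α p) ξ j k =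
      ((jacCoef α ξ.natAbs j * jacCoef α ξ.natAbs k *
        ∑ k1 ∈ range (j+1), ∑ k2 ∈ range (k+1),
          jcoef α ξ.natAbs j k1 * jcoef α ξ.natAbs k k2
            * Ient α p (k1+k2+ξ.natAbs) : ℝ) : ℂ) := by
  set β : ℕ := ξ.natAbs with hβ
  rw [gammaEnt]
  have hint : (∫ t in (0:ℝ)..1, gSym α p (Real.sqrt t) *
      ((jacQ α β j t * jacQ α β k t * (1 - t) ^ α * t ^ β : ℝ) : ℂ))
      = ((∫ t in (0:ℝ)..1,
          jacQ α 0 p t * (jacQ α β j t * jacQ α β k t * (1 - t) ^ α * t ^ β) : ℝ) : ℂ) := by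
    rw [← intervalIntegral.integral_ofReal]
    apply intervalIntegral.integral_congr
    intro x hx
    rw [Set.uIcc_of_le (by norm_num : (0:ℝ) ≤ 1)] at hx
    simp only [gSym, Real.sq_sqrt hx.1]
    push_cast
    ring
  rw [hint, ← Complex.ofReal_mul, Complex.ofReal_inj]
  congr 1
  have expand : ∀ t : ℝ, jacQ α 0 p t * (jacQ α β j t * jacQ α β k t * (1 - t) ^ α * t ^ β)
      = ∑ q ∈ range (j+1) ×ˢ range (k+1),
          (jcoef α β j q.1 * jcoef α β k q.2)
            * ((jacQ α 0 p t * t^(q.1+q.2+β)) * (1-t)^α) := by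
    intro t
    rw [Finset.sum_product]
    rw [jacQ_eq α β j t, jacQ_eq α β k t, Finset.sum_mul_sum]
    rw [Finset.sum_mul, Finset.sum_mul, Finset.mul_sum]
    refine Finset.sum_congr rfl fun k1 _ => ?_
    rw [Finset.sum_mul, Finset.sum_mul, Finset.mul_sum]
    refine Finset.sum_congr rfl fun k2 _ => ?_
    rw [pow_add, pow_add]
    ring
  rw [intervalIntegral.integral_congr (fun t _ => expand t)]
  rw [intervalIntegral.integral_finset_sum (fun q _ =>
    (II_mul hα (g := fun t => jacQ α 0 p t * t^(q.1+q.2+β)) ((continuous_jacQ α 0 p).mul (continuous_pow _))).const_mul _)]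
  rw [← Finset.sum_product']
  refine Finset.sum_congr rfl fun q _ => ?_
  rw [intervalIntegral.integral_const_mul]
  rfl

lemma jacCoefAux_pos {α : ℝ} (hα : -1 < α) {β : ℝ} (hβ : 0 ≤ β) (m : ℕ) :
    0 < Real.sqrt ((2 * m + α + β + 1) * Real.Gamma (m + α + β + 1) * (Nat.factorial m) /
      (Real.Gamma (m + α + 1) * Real.Gamma (m + β + 1))) := by
  have hm : (0:ℝ) ≤ m := Nat.cast_nonneg m
  apply Real.sqrt_pos.mpr
  apply div_pos
  · apply mul_pos
    apply mul_pos
    · linarith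
    · exact Real.Gamma_pos_of_pos (by linarith)
    · exact_mod_cast Nat.factorial_pos m
  · exact mul_pos (Real.Gamma_pos_of_pos (by linarith)) (Real.Gamma_pos_of_pos (by linarith))

lemma gammaEnt_vanish {α : ℝ} (hα : -1 < α) (p j k : ℕ) (ξ : ℤ)
    (h : j + k + ξ.natAbs < p) : gammaEnt α (gSym α p) ξ j k = 0 := by
  rw [gammaEnt_eq hα p j k ξ]
  have hz : (∑ k1 ∈ range (j+1), ∑ k2 ∈ range (k+1),
      jcoef α ξ.natAbs j k1 * jcoef α ξ.natAbs k k2 * Ient α p (k1+k2+ξ.natAbs)) = 0 := by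
    apply Finset.sum_eq_zero; intro k1 h1
    apply Finset.sum_eq_zero; intro k2 h2
    rw [Finset.mem_range] at h1 h2
    rw [Ient_vanish hα (by omega), mul_zero]
  rw [hz, mul_zero, Complex.ofReal_zero]

lemma gammaEnt_ne {α : ℝ} (hα : -1 < α) (p j k : ℕ) (ξ : ℤ)
    (h : j + k + ξ.natAbs = p) : gammaEnt α (gSym α p) ξ j k ≠ 0 := by
  rw [gammaEnt_eq hα p j k ξ]
  have hβ0 : (0:ℝ) ≤ (ξ.natAbs : ℝ) := Nat.cast_nonneg _
  have hsum : (∑ k1 ∈ range (j+1), ∑ k2 ∈ range (k+1),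
      jcoef α ξ.natAbs j k1 * jcoef α ξ.natAbs k k2 * Ient α p (k1+k2+ξ.natAbs))
      = jcoef α ξ.natAbs j j * jcoef α ξ.natAbs k k * Ient α p p := by
    rw [Finset.sum_eq_single j (fun k1 hk1 hne => Finset.sum_eq_zero (fun k2 hk2 => by
        rw [Finset.mem_range] at hk1 hk2
        rw [Ient_vanish hα (by omega), mul_zero]))
      (fun hh => absurd (Finset.self_mem_range_succ j) hh)]
    rw [Finset.sum_eq_single k (fun k2 hk2 hne => by
        rw [Finset.mem_range] at hk2
        rw [Ient_vanish hα (by omega), mul_zero])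
      (fun hh => absurd (Finset.self_mem_range_succ k) hh)]
    rw [(by omega : j + k + ξ.natAbs = p)]
  rw [hsum]
  apply Complex.ofReal_ne_zero.mpr
  apply ne_of_gt
  apply mul_pos
  · exact mul_pos (jacCoefAux_pos hα hβ0 j) (jacCoefAux_pos hα hβ0 k)
  · exact mul_pos (mul_pos (jcoef_lead_pos hα hβ0 j) (jcoef_lead_pos hα hβ0 k)) (Ient_pos hα p)


lemma star_stdBasis {d : ℕ} (j k : Fin d) :
    star (Matrix.single j k (1:ℂ)) = Matrix.single k j 1 := by
  ext a b
  rw [Matrix.star_apply]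
  simp only [Matrix.single, Matrix.of_apply]
  split_ifs with h1 h2 h3 <;> simp_all <;> tauto

lemma gen_matrix_units {d : ℕ} (hd : 1 ≤ d) (A : StarSubalgebra ℂ (Matrix (Fin d) (Fin d) ℂ))
    (M : ℕ → Matrix (Fin d) (Fin d) ℂ)
    (hM : ∀ q, q < d → M q ∈ A)
    (hvan : ∀ q, q < d → ∀ j k : Fin d, (j:ℕ)+(k:ℕ) < (d-1)+q → M q j k = 0)
    (hne : ∀ q, q < d → ∀ j k : Fin d, (j:ℕ)+(k:ℕ) = (d-1)+q → M q j k ≠ 0) :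
    ∀ j k : Fin d, Matrix.single j k (1:ℂ) ∈ A := by
  suffices H : ∀ r : ℕ, ∀ j k : Fin d, d-1-r ≤ (j:ℕ) → d-1-r ≤ (k:ℕ) →
      Matrix.single j k (1:ℂ) ∈ A by
    intro j k
    exact H (d-1) j k (by omega) (by omega)
  intro r
  induction r with
  | zero =>
    intro j k hj hk
    have hj' : (j:ℕ) = d-1 := by have := j.isLt; omega
    have hk' : (k:ℕ) = d-1 := by have := k.isLt; omega
    set c : ℂ := M (d-1) j k with hc
    have hcne : c ≠ 0 := hne (d-1) (by omega) j k (by omega)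
    have hMeq : M (d-1) = c • Matrix.single j k (1:ℂ) := by
      ext ja ka
      rw [Matrix.smul_apply]
      by_cases hjk : ja = j ∧ ka = k
      · rw [hjk.1, hjk.2, Matrix.single_apply_same, smul_eq_mul, mul_one]
      · have h1 : (ja:ℕ) + (ka:ℕ) < (d-1) + (d-1) := by
          have h2 := ja.isLt; have h3 := ka.isLt
          rcases not_and_or.mp hjk with h | h
          · have : (ja:ℕ) ≠ d-1 := fun hh => h (Fin.ext (by omega))
            omega
          · have : (ka:ℕ) ≠ d-1 := fun hh => h (Fin.ext (by omega))
            omega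
        rw [hvan (d-1) (by omega) ja ka h1,
          Matrix.single_apply_of_ne _ _ _ _ _ (by tauto), smul_zero]
    have hmem : M (d-1) ∈ A := hM (d-1) (by omega)
    rw [hMeq] at hmem
    have h2 := A.smul_mem hmem c⁻¹
    rwa [smul_smul, inv_mul_cancel₀ hcne, one_smul] at h2
  | succ r IH =>
    intro j k hj hk
    by_cases hr : r + 2 ≤ d
    · -- main step, s := d-1-(r+1) = d-2-r
      set s : ℕ := d-2-r with hs
      have hs1 : d-1-(r+1) = s := by omega
      have hsd : s < d := by omega
      have hs2 : s + 1 = d-1-r := by omega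
      set e : Fin d := ⟨d-1, by omega⟩ with he
      set sF : Fin d := ⟨s, hsd⟩ with hsF
      have heval : (e:ℕ) = d-1 := rfl
      have hsval : (sF:ℕ) = s := rfl
      have hEe : Matrix.single e e (1:ℂ) ∈ A :=
        IH e e (by rw [heval]; omega) (by rw [heval]; omega)
      set c : ℂ := M s sF e with hc
      have hcne : c ≠ 0 := hne s (by omega) sF e (by rw [heval, hsval]; omega)
      have hsum : M s * Matrix.single e e 1
          = ∑ jj : Fin d, (M s jj e) • Matrix.single jj e (1:ℂ) := by
        ext ja ka
        rw [Matrix.sum_apply]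
        by_cases hka : ka = e
        · subst hka
          rw [Matrix.mul_single_apply_same, mul_one]
          rw [Finset.sum_eq_single ja (fun jj _ hjj => by
            rw [Matrix.smul_apply,
              Matrix.single_apply_of_ne _ _ _ _ _ (by tauto), smul_zero])
            (fun hh => absurd (Finset.mem_univ ja) hh)]
          rw [Matrix.smul_apply, Matrix.single_apply_same, smul_eq_mul, mul_one]
        · rw [Matrix.mul_single_apply_of_ne _ _ _ _ _ hka]
          rw [Finset.sum_eq_zero]
          intro jj _
          rw [Matrix.smul_apply,
            Matrix.single_apply_of_ne _ _ _ _ _ (by tauto), smul_zero]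
      have hsplit : c • Matrix.single sF e (1:ℂ)
          = M s * Matrix.single e e 1
            - ∑ jj ∈ Finset.univ.erase sF, (M s jj e) • Matrix.single jj e (1:ℂ) := by
        rw [hsum, ← Finset.add_sum_erase Finset.univ _ (Finset.mem_univ sF)]
        abel
      have hrest : (∑ jj ∈ Finset.univ.erase sF,
          (M s jj e) • Matrix.single jj e (1:ℂ)) ∈ A := by
        apply sum_mem
        intro jj hjj
        have hjjne : (jj:ℕ) ≠ s := fun hh => (Finset.mem_erase.mp hjj).1 (Fin.ext hh)
        by_cases hlt : (jj:ℕ) < s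
        · rw [hvan s (by omega) jj e (by rw [heval]; omega), zero_smul]
          exact zero_mem A
        · exact A.smul_mem (IH jj e (by omega) (by rw [heval]; omega)) _
      have hcE : c • Matrix.single sF e (1:ℂ) ∈ A := by
        rw [hsplit]
        exact sub_mem (mul_mem (hM s (by omega)) hEe) hrest
      have hse : Matrix.single sF e (1:ℂ) ∈ A := by
        have h2 := A.smul_mem hcE c⁻¹
        rwa [smul_smul, inv_mul_cancel₀ hcne, one_smul] at h2
      have hes : Matrix.single e sF (1:ℂ) ∈ A := by
        have h3 := star_mem hse
        rwa [star_stdBasis] at h3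
      have hje : Matrix.single j e (1:ℂ) ∈ A := by
        by_cases hjs : (j:ℕ) = s
        · have hj4 : j = sF := Fin.ext (by rw [hsval, hjs])
          rwa [hj4]
        · exact IH j e (by omega) (by rw [heval]; omega)
      have hek : Matrix.single e k (1:ℂ) ∈ A := by
        by_cases hks : (k:ℕ) = s
        · have hk4 : k = sF := Fin.ext (by rw [hsval, hks])
          rwa [hk4]
        · exact IH e k (by rw [heval]; omega) (by omega)
      have h5 := mul_mem hje hek
      rwa [Matrix.single_mul_single_same, one_mul] at h5
    · exact IH j k (by omega) (by omega)

end St11Aux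

open St11Aux in
/-- for `ξ ∈ {-n+1, …, -1}`, the matrices `γ(g_{n-1})_ξ, …, γ(g_{2n-2+ξ})_ξ`
generate the full matrix star-algebra `M_{n+ξ}(ℂ) = M_{d_ξ}(ℂ)`. -/
theorem statement11 (n : ℕ) (hn : 2 ≤ n) (α : ℝ) (hα : -1 < α) (ξ : ℤ)
    (hξ₁ : 1 - (n : ℤ) ≤ ξ) (hξ₂ : ξ ≤ -1) :
    StarAlgebra.adjoin ℂ
      {A : Matrix (Fin (dd n ξ)) (Fin (dd n ξ)) ℂ |
        ∃ q : Fin (dd n ξ), A = gammaMat n α (gSym α (n - 1 + (q : ℕ))) ξ} = ⊤ := by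
  set d : ℕ := dd n ξ with hdd
  set β : ℕ := ξ.natAbs with hβ
  have hβd : d + β = n := by
    rw [hdd, hβ, dd]
    omega
  have hβ1 : 1 ≤ β := by rw [hβ]; omega
  have hd1 : 1 ≤ d := by omega
  set A := StarAlgebra.adjoin ℂ
      {A : Matrix (Fin (dd n ξ)) (Fin (dd n ξ)) ℂ |
        ∃ q : Fin (dd n ξ), A = gammaMat n α (gSym α (n - 1 + (q : ℕ))) ξ} with hA
  have hgen := gen_matrix_units hd1 A (fun q => gammaMat n α (gSym α (n - 1 + q)) ξ)
    (fun q hq => StarAlgebra.subset_adjoin ℂ _ ⟨⟨q, hq⟩, rfl⟩)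
    (fun q hq j k hjk => gammaEnt_vanish hα (n-1+q) j k ξ (by omega))
    (fun q hq j k hjk => gammaEnt_ne hα (n-1+q) j k ξ (by omega))
  rw [eq_top_iff]
  intro x _
  rw [Matrix.matrix_eq_sum_single x]
  apply sum_mem
  intro j _
  apply sum_mem
  intro k _
  have hx : Matrix.single j k (x j k) = (x j k) • Matrix.single j k (1:ℂ) := by
    rw [Matrix.smul_single, smul_eq_mul, mul_one]
  rw [hx]
  exact A.smul_mem (hgen j k) _
end
end
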